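/- arXiv:1901.10612 — 8 statements merged into one kernel-verified Lean document; each statement's English description precedes it below -/
import Mathlib

section
/- Let n ≥ 3 and let Φ = (φ_1,…,φ_n) be an equiangular tight frame for ℂ^d that is triply covariant (its symmetry group acts 3-transitively on the indices). Then d = 1, or n = d, or n = d + 1. In particular, the only non-trivial triply covariant equiangular tight frames are orthonormal bases and simplices. -/
open scoped ComplexInnerProductSpace

noncomputable section

/-- `(φ_1, …, φ_n)` is an equiangular tight frame (ETF) for `ℂ^d`. -/
def IsETF (d n : ℕ) (φ : Fin n → EuclideanSpace ℂ (Fin d)) : Prop :=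
  (∀ x : EuclideanSpace ℂ (Fin d), x = ((d : ℂ) / (n : ℂ)) • ∑ j, ⟪φ j, x⟫ • φ j) ∧
  (∀ j, ‖φ j‖ = 1) ∧
  (∃ α : ℝ, 0 ≤ α ∧ ∀ j k, j ≠ k → ‖⟪φ j, φ k⟫‖ = α)

/-- `U` is a symmetry of `φ` with induced permutation `σ`:
`U φ_j φ_j^* U^* = φ_{σ(j)} φ_{σ(j)}^*` for all `j`. -/
def IsSymmetry {d n : ℕ} (φ : Fin n → EuclideanSpace ℂ (Fin d))
    (U : EuclideanSpace ℂ (Fin d) ≃ₗᵢ[ℂ] EuclideanSpace ℂ (Fin d))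
    (σ : Equiv.Perm (Fin n)) : Prop :=
  ∀ j x, U (⟪φ j, U.symm x⟫ • φ j) = ⟪φ (σ j), x⟫ • φ (σ j)

/-- `φ` is triply covariant: the symmetry group acts 3-transitively on the indices. -/
def TriplyCovariant {d n : ℕ} (φ : Fin n → EuclideanSpace ℂ (Fin d)) : Prop :=
  ∀ j k l j' k' l' : Fin n, j ≠ k → j ≠ l → k ≠ l → j' ≠ k' → j' ≠ l' → k' ≠ l' →
    ∃ (U : EuclideanSpace ℂ (Fin d) ≃ₗᵢ[ℂ] EuclideanSpace ℂ (Fin d))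
      (σ : Equiv.Perm (Fin n)),
      IsSymmetry φ U σ ∧ σ j = j' ∧ σ k = k' ∧ σ l = l'

set_option maxHeartbeats 1000000 in
lemma sym_tp {d n : ℕ} {φ : Fin n → EuclideanSpace ℂ (Fin d)}
    {U : EuclideanSpace ℂ (Fin d) ≃ₗᵢ[ℂ] EuclideanSpace ℂ (Fin d)}
    {σ : Equiv.Perm (Fin n)} (hS : IsSymmetry φ U σ) (hnorm : ∀ j, ‖φ j‖ = 1)
    (a b c : Fin n) :
    ⟪φ a, φ b⟫ * ⟪φ b, φ c⟫ * ⟪φ c, φ a⟫ =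
      ⟪φ (σ a), φ (σ b)⟫ * ⟪φ (σ b), φ (σ c)⟫ * ⟪φ (σ c), φ (σ a)⟫ := by
  have sym_apply : ∀ a : Fin n, U (φ a) = ⟪φ (σ a), U (φ a)⟫ • φ (σ a) := by
    intro a
    have := hS a (U (φ a))
    rw [U.symm_apply_apply, inner_self_eq_norm_sq_to_K, hnorm a] at this
    simpa using this
  set e : Fin n → ℂ := fun a => ⟪φ (σ a), U (φ a)⟫ with he
  have hU : ∀ a, U (φ a) = e a • φ (σ a) := fun a => sym_apply a
  have hmod : ∀ a, e a * (starRingEnd ℂ) (e a) = 1 := by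
    intro a
    have h1 : ‖U (φ a)‖ = 1 := by rw [U.norm_map]; exact hnorm a
    rw [hU a, norm_smul, hnorm (σ a), mul_one] at h1
    rw [Complex.mul_conj]
    norm_cast
    rw [Complex.normSq_eq_norm_sq, h1]; norm_num
  have key : ∀ a b : Fin n,
      ⟪φ a, φ b⟫ = (starRingEnd ℂ) (e a) * e b * ⟪φ (σ a), φ (σ b)⟫ := by
    intro a b
    rw [← U.inner_map_map (φ a) (φ b), hU a, hU b, inner_smul_left, inner_smul_right]
    ring
  rw [key a b, key b c, key c a]
  have ha := hmod a; have hb := hmod b; have hc := hmod c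
  linear_combination (⟪φ (σ a), φ (σ b)⟫ * ⟪φ (σ b), φ (σ c)⟫ * ⟪φ (σ c), φ (σ a)⟫) *
    ((e b * (starRingEnd ℂ) (e b)) * (e c * (starRingEnd ℂ) (e c)) * ha +
     (e c * (starRingEnd ℂ) (e c)) * hb + hc)

set_option maxHeartbeats 1000000 in
/-- A triply covariant ETF of `n ≥ 3` vectors in `ℂ^d` satisfies `d = 1`, `n = d`, or
`n = d + 1`; i.e., the only non-trivial triply covariant ETFs are orthonormal bases
and simplices. -/
theorem triply_covariant_etf {d n : ℕ} (hn : 3 ≤ n)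
    (φ : Fin n → EuclideanSpace ℂ (Fin d))
    (hETF : IsETF d n φ) (hcov : TriplyCovariant φ) :
    d = 1 ∨ n = d ∨ n = d + 1 := by
  obtain ⟨hframe, hnorm, α, hα0, hαeq⟩ := hETF
  -- d ≠ 0
  have hd0 : d ≠ 0 := by
    rintro rfl
    have h := hnorm ⟨0, by omega⟩
    rw [Subsingleton.elim (φ ⟨0, by omega⟩) 0, norm_zero] at h
    norm_num at h
  have hn0 : n ≠ 0 := by omega
  have hdc : (d : ℂ) ≠ 0 := Nat.cast_ne_zero.mpr hd0
  have hnc : (n : ℂ) ≠ 0 := Nat.cast_ne_zero.mpr hn0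
  have hdiag : ∀ j, ⟪φ j, φ j⟫ = 1 := by
    intro j; rw [inner_self_eq_norm_sq_to_K, hnorm j]; norm_num
  -- Gram squared relation
  have hG2 : ∀ k l, ∑ j, ⟪φ k, φ j⟫ * ⟪φ j, φ l⟫ = ((n : ℂ)/(d : ℂ)) * ⟪φ k, φ l⟫ := by
    intro k l
    have h : ⟪φ k, φ l⟫ = ((d : ℂ)/(n : ℂ)) * ∑ j, ⟪φ j, φ l⟫ * ⟪φ k, φ j⟫ := by
      conv_lhs => rw [hframe (φ l)]
      rw [inner_smul_right, inner_sum]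
      simp [inner_smul_right, mul_comm]
    have hcancel : ((n : ℂ)/(d : ℂ)) * ((d : ℂ)/(n : ℂ)) = 1 := by field_simp
    have h' : ((n : ℂ)/(d : ℂ)) * ⟪φ k, φ l⟫ = ∑ j, ⟪φ j, φ l⟫ * ⟪φ k, φ j⟫ := by
      rw [h, ← mul_assoc, hcancel, one_mul]
    calc ∑ j, ⟪φ k, φ j⟫ * ⟪φ j, φ l⟫ = ∑ j, ⟪φ j, φ l⟫ * ⟪φ k, φ j⟫ :=
          Finset.sum_congr rfl fun j _ => mul_comm _ _
      _ = _ := h'.symm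
  -- conj products
  have hconj : ∀ a b : Fin n, ⟪φ a, φ b⟫ * ⟪φ b, φ a⟫ = ((‖⟪φ a, φ b⟫‖^2 : ℝ) : ℂ) := by
    intro a b
    rw [← inner_conj_symm (φ b) (φ a), Complex.mul_conj]
    norm_cast
    rw [Complex.normSq_eq_norm_sq]
  -- indices
  set j0 : Fin n := ⟨0, by omega⟩ with hj0def
  set j1 : Fin n := ⟨1, by omega⟩ with hj1def
  set j2 : Fin n := ⟨2, by omega⟩ with hj2def
  have h01 : j0 ≠ j1 := by simp [hj0def, hj1def, Fin.ext_iff]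
  have h02 : j0 ≠ j2 := by simp [hj0def, hj2def, Fin.ext_iff]
  have h12 : j1 ≠ j2 := by simp [hj1def, hj2def, Fin.ext_iff]
  -- Step A : 1 + (n-1) α² = n/d  (real)
  have e1 : 1 + ((n:ℝ)-1)*α^2 = (n:ℝ)/(d:ℝ) := by
    have hsum := hG2 j0 j0
    rw [← Finset.sum_erase_add Finset.univ _ (Finset.mem_univ j0)] at hsum
    rw [hdiag j0, mul_one, mul_one] at hsum
    have hterm : ∀ j ∈ Finset.univ.erase j0, ⟪φ j0, φ j⟫ * ⟪φ j, φ j0⟫ = ((α^2 : ℝ) : ℂ) := by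
      intro j hj
      rw [hconj j0 j, hαeq j0 j (Finset.ne_of_mem_erase hj).symm]
    rw [Finset.sum_congr rfl hterm, Finset.sum_const,
      Finset.card_erase_of_mem (Finset.mem_univ j0),
      Finset.card_univ, Fintype.card_fin, nsmul_eq_mul] at hsum
    have e1' : ((n-1:ℕ):ℝ)*α^2 + 1 = (n:ℝ)/(d:ℝ) := by
      apply Complex.ofReal_injective
      push_cast at hsum ⊢
      exact hsum
    have hcast : ((n-1:ℕ):ℝ) = (n:ℝ) - 1 := by
      have : (1:ℕ) ≤ n := by omega
      push_cast [Nat.cast_sub this]; ring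
    rw [hcast] at e1'
    linarith
  -- T : the common triple product
  set T : ℂ := ⟪φ j0, φ j1⟫ * ⟪φ j1, φ j2⟫ * ⟪φ j2, φ j0⟫ with hTdef
  have hTconst : ∀ a b c : Fin n, a ≠ b → a ≠ c → b ≠ c →
      ⟪φ a, φ b⟫ * ⟪φ b, φ c⟫ * ⟪φ c, φ a⟫ = T := by
    intro a b c hab hac hbc
    obtain ⟨U, σ, hS, h1, h2, h3⟩ := hcov j0 j1 j2 a b c h01 h02 h12 hab hac hbc
    have := sym_tp hS hnorm j0 j1 j2
    rw [h1, h2, h3] at this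
    exact this.symm
  -- T is real
  have hTreal : (starRingEnd ℂ) T = T := by
    have h1 : ⟪φ j0, φ j2⟫ * ⟪φ j2, φ j1⟫ * ⟪φ j1, φ j0⟫ = T :=
      hTconst j0 j2 j1 h02 h01 h12.symm
    have h2 : (starRingEnd ℂ) T = ⟪φ j1, φ j0⟫ * ⟪φ j2, φ j1⟫ * ⟪φ j0, φ j2⟫ := by
      rw [hTdef]; simp only [map_mul, inner_conj_symm]
    rw [h2, ← h1]; ring
  set t : ℝ := T.re with htdef
  have hTt : T = (t : ℝ) := (Complex.conj_eq_iff_re.mp hTreal).symm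
  -- |t| relation: t^2 = α^6
  have e3 : t^2 = α^6 := by
    have hTn : ‖T‖ = α^3 := by
      rw [hTdef, norm_mul, norm_mul, hαeq j0 j1 h01, hαeq j1 j2 h12, hαeq j2 j0 h02.symm]
      ring
    rw [hTt] at hTn
    rw [Complex.norm_real, Real.norm_eq_abs] at hTn
    calc t^2 = |t|^2 := (sq_abs t).symm
    _ = (α^3)^2 := by rw [hTn]
    _ = α^6 := by ring
  -- Step B : (n-2) t = (n/d - 2) α²
  have e2 : ((n:ℝ)-2) * t = ((n:ℝ)/(d:ℝ) - 2) * α^2 := by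
    have hbase := hG2 j1 j0
    have hmul := congrArg (fun z => ⟪φ j0, φ j1⟫ * z) hbase
    simp only [Finset.mul_sum] at hmul
    -- hmul : ∑ l, ⟪φ j0, φ j1⟫ * (⟪φ j1, φ l⟫ * ⟪φ l, φ j0⟫) = ⟪φ j0,φ j1⟫ * ((n/d) * ⟪φ j1, φ j0⟫)
    set F : Fin n → ℂ := fun l => ⟪φ j0, φ j1⟫ * (⟪φ j1, φ l⟫ * ⟪φ l, φ j0⟫) with hFdef
    have hj1mem : j1 ∈ Finset.univ.erase j0 := Finset.mem_erase.mpr ⟨h01.symm, Finset.mem_univ j1⟩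
    rw [← Finset.sum_erase_add Finset.univ F (Finset.mem_univ j0),
        ← Finset.sum_erase_add (Finset.univ.erase j0) F hj1mem] at hmul
    have hFj0 : F j0 = ((α^2 : ℝ) : ℂ) := by
      rw [hFdef]; simp only [hdiag j0, mul_one]
      rw [hconj j0 j1, hαeq j0 j1 h01]
    have hFj1 : F j1 = ((α^2 : ℝ) : ℂ) := by
      rw [hFdef]; simp only [hdiag j1, one_mul]
      rw [hconj j0 j1, hαeq j0 j1 h01]
    have hFT : ∀ l ∈ (Finset.univ.erase j0).erase j1, F l = T := by
      intro l hl
      have hl1 : l ≠ j1 := Finset.ne_of_mem_erase hl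
      have hl0 : l ≠ j0 := Finset.ne_of_mem_erase (Finset.mem_of_mem_erase hl)
      have := hTconst j0 j1 l h01 hl0.symm hl1.symm
      rw [hFdef]
      rw [← this]; ring
    rw [Finset.sum_congr rfl hFT, Finset.sum_const, hFj0, hFj1] at hmul
    have hcard : ((Finset.univ.erase j0).erase j1).card = n - 2 := by
      rw [Finset.card_erase_of_mem hj1mem, Finset.card_erase_of_mem (Finset.mem_univ j0),
        Finset.card_univ, Fintype.card_fin]
      omega
    rw [hcard, nsmul_eq_mul] at hmul
    have hrhs : ⟪φ j0, φ j1⟫ * (((n:ℂ)/(d:ℂ)) * ⟪φ j1, φ j0⟫)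
        = ((n:ℂ)/(d:ℂ)) * ((α^2:ℝ) : ℂ) := by
      calc ⟪φ j0, φ j1⟫ * (((n:ℂ)/(d:ℂ)) * ⟪φ j1, φ j0⟫)
          = ((n:ℂ)/(d:ℂ)) * (⟪φ j0, φ j1⟫ * ⟪φ j1, φ j0⟫) := by ring
        _ = _ := by rw [hconj j0 j1, hαeq j0 j1 h01]
    rw [hrhs, hTt] at hmul
    -- hmul : ↑(n-2) * ↑t + ↑(α^2) + ↑(α^2) = (n/d) * ↑(α^2)
    have e2' : ((n-2:ℕ):ℝ) * t + α^2 + α^2 = ((n:ℝ)/(d:ℝ)) * α^2 := by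
      apply Complex.ofReal_injective
      push_cast at hmul ⊢
      exact hmul
    have hcast : ((n-2:ℕ):ℝ) = (n:ℝ) - 2 := by
      have : (2:ℕ) ≤ n := by omega
      push_cast [Nat.cast_sub this]; ring
    rw [hcast] at e2'
    linarith
  -- final algebra over ℝ
  set D : ℝ := (d:ℝ) with hDdef
  set N : ℝ := (n:ℝ) with hNdef
  have hD1 : 1 ≤ D := by rw [hDdef]; exact_mod_cast Nat.one_le_iff_ne_zero.mpr hd0
  have hN3 : 3 ≤ N := by rw [hNdef]; exact_mod_cast hn
  have hDne : D ≠ 0 := by linarith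
  have hNne : N ≠ 0 := by linarith
  set β : ℝ := α^2 with hβdef
  have hβ0 : 0 ≤ β := sq_nonneg α
  have hND : (N/D)*D = N := div_mul_cancel₀ N hDne
  have f1 : (N-1) * β * D = N - D := by
    have h := congrArg (fun z => z * D) e1
    linear_combination h + hND
  have f2 : (N-2) * t * D = (N - 2*D) * β := by
    have h := congrArg (fun z => z * D) e2
    linear_combination h + β * hND
  have f3 : t^2 = β^3 := by rw [hβdef, e3]; ring
  rcases eq_or_lt_of_le hβ0 with hβz | hβpos
  · -- β = 0 : n = d
    right; left
    have : N = D := by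
      rw [← hβz] at f1
      simp at f1
      linarith
    rw [hNdef, hDdef] at this
    exact_mod_cast this
  · -- β > 0
    have hβ2 : β^2 ≠ 0 := by positivity
    have hstep : (N-2)^2 * β^3 * D^2 = (N - 2*D)^2 * β^2 := by
      calc (N-2)^2 * β^3 * D^2 = (N-2)^2 * t^2 * D^2 := by rw [f3]
        _ = ((N-2) * t * D)^2 := by ring
        _ = ((N - 2*D) * β)^2 := by rw [f2]
        _ = (N - 2*D)^2 * β^2 := by ring
    have key : (N-2)^2 * β * D^2 = (N - 2*D)^2 :=
      mul_right_cancel₀ hβ2 (by linear_combination hstep)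
    have P : (N-1) * (N - 2*D)^2 = (N-2)^2 * (N - D) * D := by
      calc (N-1) * (N - 2*D)^2 = (N-1) * ((N-2)^2 * β * D^2) := by rw [key]
        _ = (N-2)^2 * D * ((N-1) * β * D) := by ring
        _ = (N-2)^2 * D * (N - D) := by rw [f1]
        _ = (N-2)^2 * (N - D) * D := by ring
    have key2 : N^2 * ((D - 1) * (N - 1 - D)) = 0 := by linear_combination (-1) * P
    have key3 : (D - 1) * (N - 1 - D) = 0 := by
      have hN2 : N^2 ≠ 0 := pow_ne_zero 2 hNne
      exact (mul_eq_zero.mp key2).resolve_left hN2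
    rcases mul_eq_zero.mp key3 with h | h
    · left
      have : D = 1 := by linarith
      rw [hDdef] at this
      exact_mod_cast this
    · right; right
      have : N = D + 1 := by linarith
      rw [hNdef, hDdef] at this
      exact_mod_cast this
end
end

section
/- Let n ≥ 3 and let Φ = (φ_1,…,φ_n) be an equiangular tight frame for ℂ^d such that the triple product TP(j,k,ℓ) takes one common value c over all triples of distinct indices j,k,ℓ. Then c is real, and moreover d = 1, or n = d, or n = d + 1. -/
open scoped ComplexInnerProductSpace

noncomputable section

/-- The triple product `TP(j,k,ℓ) = ⟨φ_j,φ_k⟩⟨φ_k,φ_ℓ⟩⟨φ_ℓ,φ_j⟩`. -/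
def TP {d n : ℕ} (φ : Fin n → EuclideanSpace ℂ (Fin d)) (j k l : Fin n) : ℂ :=
  ⟪φ j, φ k⟫ * ⟪φ k, φ l⟫ * ⟪φ l, φ j⟫

set_option maxHeartbeats 1000000

/-- If an ETF of `n ≥ 3` vectors in `ℂ^d` has a common triple product value `c` over all
distinct triples, then `c` is real and `d = 1`, `n = d`, or `n = d + 1`. -/
theorem etf_common_triple_product {d n : ℕ} (hn : 3 ≤ n)
    (φ : Fin n → EuclideanSpace ℂ (Fin d)) (hETF : IsETF d n φ) (c : ℂ)
    (hc : ∀ j k l : Fin n, j ≠ k → j ≠ l → k ≠ l → TP φ j k l = c) :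
    (∃ r : ℝ, c = (r : ℂ)) ∧ (d = 1 ∨ n = d ∨ n = d + 1) := by
  obtain ⟨hframe, hnorm, α, hα0, hαeq⟩ := hETF
  set i0 : Fin n := ⟨0, by omega⟩ with hi0
  set i1 : Fin n := ⟨1, by omega⟩ with hi1
  set i2 : Fin n := ⟨2, by omega⟩ with hi2
  have h01 : i0 ≠ i1 := by simp [hi0, hi1, Fin.ext_iff]
  have h02 : i0 ≠ i2 := by simp [hi0, hi2, Fin.ext_iff]
  have h12 : i1 ≠ i2 := by simp [hi1, hi2, Fin.ext_iff]
  -- c is real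
  have hconj : (starRingEnd ℂ) c = c := by
    have h1 := hc i0 i1 i2 h01 h02 h12
    have h2 := hc i0 i2 i1 h02 h01 h12.symm
    calc (starRingEnd ℂ) c = (starRingEnd ℂ) (TP φ i0 i1 i2) := by rw [h1]
      _ = TP φ i0 i2 i1 := by simp only [TP, map_mul, inner_conj_symm]; ring
      _ = c := h2
  have hcre : ((c.re : ℝ) : ℂ) = c := Complex.conj_eq_iff_re.mp hconj
  set r : ℝ := c.re with hr
  refine ⟨⟨r, hcre.symm⟩, ?_⟩
  -- d ≥ 1
  have hdpos : 1 ≤ d := by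
    by_contra hd
    have hd0 : d = 0 := by omega
    have h1 := hnorm i0
    have hz : φ i0 = 0 := by
      subst hd0
      ext i
      exact absurd i.isLt (by omega)
    rw [hz] at h1
    simp at h1
  have hn0 : (n : ℂ) ≠ 0 := by exact_mod_cast (by omega : n ≠ 0)
  -- key frame identity
  have key : ∀ m l : Fin n, (n : ℂ) * ⟪φ m, φ l⟫ = d * ∑ k, ⟪φ m, φ k⟫ * ⟪φ k, φ l⟫ := by
    intro m l
    have hx := congrArg (fun x => ⟪φ m, x⟫) (hframe (φ l))
    simp only [inner_smul_right, inner_sum] at hx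
    have hsum : ∑ k, ⟪φ k, φ l⟫ * ⟪φ m, φ k⟫ = ∑ k, ⟪φ m, φ k⟫ * ⟪φ k, φ l⟫ :=
      Finset.sum_congr rfl (fun k _ => by ring)
    rw [hx, hsum]
    field_simp
  have hdiag : ∀ m : Fin n, ⟪φ m, φ m⟫ = 1 := by
    intro m
    rw [inner_self_eq_norm_sq_to_K, hnorm m]
    norm_num
  have habs2 : ∀ j k : Fin n, j ≠ k → ⟪φ j, φ k⟫ * ⟪φ k, φ j⟫ = ((α ^ 2 : ℝ) : ℂ) := by
    intro j k hjk
    rw [← inner_conj_symm (𝕜 := ℂ) (φ j) (φ k), mul_comm, Complex.mul_conj,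
      Complex.normSq_eq_norm_sq]
    norm_cast
    rw [hαeq k j hjk.symm]
  -- E1 : n = d * (1 + (n-1) α²)  (complex)
  have hE1C : (n : ℂ) = d * (1 + ((n : ℂ) - 1) * ((α : ℂ)) ^ 2) := by
    have h := key i0 i0
    rw [hdiag i0, mul_one] at h
    have hsplit : ∑ k, ⟪φ i0, φ k⟫ * ⟪φ k, φ i0⟫
        = ⟪φ i0, φ i0⟫ * ⟪φ i0, φ i0⟫ + ∑ k ∈ Finset.univ.erase i0, ⟪φ i0, φ k⟫ * ⟪φ k, φ i0⟫ :=
      (Finset.add_sum_erase _ _ (Finset.mem_univ i0)).symm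
    have hrest : ∑ k ∈ Finset.univ.erase i0, ⟪φ i0, φ k⟫ * ⟪φ k, φ i0⟫
        = (n - 1 : ℕ) • ((α ^ 2 : ℝ) : ℂ) := by
      rw [Finset.sum_congr rfl (fun k hk => habs2 i0 k (Ne.symm (Finset.ne_of_mem_erase hk)))]
      rw [Finset.sum_const, Finset.card_erase_of_mem (Finset.mem_univ i0), Finset.card_univ,
        Fintype.card_fin]
    rw [hsplit, hrest, hdiag i0] at h
    have hcast : ((n - 1 : ℕ) : ℂ) = (n : ℂ) - 1 := by
      push_cast [Nat.cast_sub (by omega : 1 ≤ n)]; ring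
    rw [nsmul_eq_mul, hcast] at h
    push_cast at h ⊢
    linear_combination h
  -- Case α = 0
  rcases eq_or_lt_of_le hα0 with hα | hαpos
  · right; left
    have : (n : ℂ) = (d : ℂ) := by rw [hE1C, ← hα]; push_cast; ring
    exact_mod_cast this
  -- α > 0 : off-diagonal equation
  have hA01 : ⟪φ i0, φ i1⟫ ≠ 0 := by
    intro h
    have h2 := hαeq i0 i1 h01
    rw [h] at h2
    simp at h2
    exact hαpos.ne h2
  have hE2C : ((α ^ 2 : ℝ) : ℂ) * n = d * (2 * ((α ^ 2 : ℝ) : ℂ) + ((n : ℂ) - 2) * c) := by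
    have h := key i0 i1
    -- multiply by α² and push inside the sum
    have h2 : ((α ^ 2 : ℝ) : ℂ) * ((n : ℂ) * ⟪φ i0, φ i1⟫)
        = d * ∑ k, ((α ^ 2 : ℝ) : ℂ) * (⟪φ i0, φ k⟫ * ⟪φ k, φ i1⟫) := by
      rw [h, ← Finset.mul_sum]
      ring
    -- evaluate the sum
    set g : Fin n → ℂ := fun k => ((α ^ 2 : ℝ) : ℂ) * (⟪φ i0, φ k⟫ * ⟪φ k, φ i1⟫) with hg
    have hmem1 : i1 ∈ Finset.univ.erase i0 := Finset.mem_erase.mpr ⟨h01.symm, Finset.mem_univ i1⟩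
    have hsplit : ∑ k, g k = g i0 + (g i1 + ∑ k ∈ (Finset.univ.erase i0).erase i1, g k) := by
      rw [Finset.add_sum_erase _ g hmem1, Finset.add_sum_erase _ g (Finset.mem_univ i0)]
    have hterm : ∀ k ∈ (Finset.univ.erase i0).erase i1, g k = c * ⟪φ i0, φ i1⟫ := by
      intro k hk
      have hk1 : k ≠ i1 := (Finset.mem_erase.mp hk).1
      have hk0 : k ≠ i0 := (Finset.mem_erase.mp (Finset.mem_erase.mp hk).2).1
      have htp := hc i0 k i1 (Ne.symm hk0) h01 hk1
      have hab := habs2 i0 i1 h01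
      calc g k = (⟪φ i0, φ i1⟫ * ⟪φ i1, φ i0⟫) * (⟪φ i0, φ k⟫ * ⟪φ k, φ i1⟫) := by rw [hg]; rw [← hab]
        _ = (⟪φ i0, φ k⟫ * ⟪φ k, φ i1⟫ * ⟪φ i1, φ i0⟫) * ⟪φ i0, φ i1⟫ := by ring
        _ = c * ⟪φ i0, φ i1⟫ := by
            rw [show ⟪φ i0, φ k⟫ * ⟪φ k, φ i1⟫ * ⟪φ i1, φ i0⟫ = TP φ i0 k i1 from rfl, htp]
    have hcard : ((Finset.univ.erase i0).erase i1).card = n - 2 := by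
      rw [Finset.card_erase_of_mem hmem1, Finset.card_erase_of_mem (Finset.mem_univ i0),
        Finset.card_univ, Fintype.card_fin]
      omega
    have hrest : ∑ k ∈ (Finset.univ.erase i0).erase i1, g k = (n - 2 : ℕ) • (c * ⟪φ i0, φ i1⟫) := by
      rw [Finset.sum_congr rfl hterm, Finset.sum_const, hcard]
    have hg0 : g i0 = ((α ^ 2 : ℝ) : ℂ) * ⟪φ i0, φ i1⟫ := by rw [hg]; simp [hdiag i0, hnorm]
    have hg1 : g i1 = ((α ^ 2 : ℝ) : ℂ) * ⟪φ i0, φ i1⟫ := by rw [hg]; simp [hdiag i1, hnorm]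
    rw [hsplit, hrest, hg0, hg1, nsmul_eq_mul] at h2
    have hcast : ((n - 2 : ℕ) : ℂ) = (n : ℂ) - 2 := by
      push_cast [Nat.cast_sub (by omega : 2 ≤ n)]; ring
    rw [hcast] at h2
    push_cast at h2 ⊢
    apply mul_right_cancel₀ hA01
    linear_combination h2
  -- pass to real equations
  have hE1R : (n : ℝ) = d * (1 + ((n : ℝ) - 1) * α ^ 2) := by
    have : ((n : ℝ) : ℂ) = (((d : ℝ) * (1 + ((n : ℝ) - 1) * α ^ 2) : ℝ) : ℂ) := by
      push_cast
      linear_combination hE1C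
    exact_mod_cast this
  have hE2R : α ^ 2 * n = d * (2 * α ^ 2 + ((n : ℝ) - 2) * r) := by
    have : ((α ^ 2 * n : ℝ) : ℂ) = (((d : ℝ) * (2 * α ^ 2 + ((n : ℝ) - 2) * r) : ℝ) : ℂ) := by
      push_cast
      rw [hcre]
      push_cast at hE2C
      linear_combination hE2C
    exact_mod_cast this
  -- |r| = α³
  have hrabs : |r| = α ^ 3 := by
    have h1 := hc i0 i1 i2 h01 h02 h12
    have : ‖c‖ = α ^ 3 := by
      rw [← h1, TP, norm_mul, norm_mul, hαeq i0 i1 h01, hαeq i1 i2 h12, hαeq i2 i0 h02.symm]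
      ring
    rw [← hcre, Complex.norm_real, Real.norm_eq_abs] at this
    exact this
  -- final real arithmetic
  clear_value r
  clear hc hframe hnorm hαeq key hdiag habs2 hE1C hE2C hconj hcre hA01 hn0 h01 h02 h12 hi0 hi1 hi2 hr c
  set N : ℝ := (n : ℝ) with hN
  set D : ℝ := (d : ℝ) with hD
  have hN3 : (3 : ℝ) ≤ N := by rw [hN]; exact_mod_cast hn
  have hD1 : (1 : ℝ) ≤ D := by rw [hD]; exact_mod_cast hdpos
  have hDpos : (0 : ℝ) < D := by linarith
  have hkey : α ^ 2 * (D * (1 + (N - 1) * α ^ 2)) = D * (2 * α ^ 2 + (N - 2) * r) := by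
    rw [← hE1R]; exact hE2R
  rcases (abs_eq (by positivity : (0:ℝ) ≤ α ^ 3)).mp hrabs with hrc | hrc
  · -- r = α³ : show d = 1
    left
    have hQ : (N - 1) * α ^ 2 - (N - 2) * α - 1 = 0 := by
      have hz : D * (α ^ 2 * ((N - 1) * α ^ 2 - (N - 2) * α - 1)) = 0 := by
        rw [hrc] at hkey
        linear_combination hkey
      have hz2 : α ^ 2 * ((N - 1) * α ^ 2 - (N - 2) * α - 1) = 0 :=
        (mul_eq_zero.mp hz).resolve_left hDpos.ne'
      exact (mul_eq_zero.mp hz2).resolve_left (pow_ne_zero 2 hαpos.ne')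
    have hfac : (α - 1) * ((N - 1) * α + 1) = 0 := by linear_combination hQ
    have hα1 : α = 1 := by
      rcases mul_eq_zero.mp hfac with h | h
      · linarith [sub_eq_zero.mp h]
      · nlinarith
    have hD1' : N * (D - 1) = 0 := by
      rw [hα1] at hE1R
      linear_combination -hE1R
    have hNe : N ≠ 0 := by linarith
    have : D = 1 := by
      have := (mul_eq_zero.mp hD1').resolve_left hNe
      linarith [sub_eq_zero.mp this]
    rw [hD] at this
    exact_mod_cast this
  · -- r = -α³ : show n = d + 1
    right; right
    have hQ : (N - 1) * α ^ 2 + (N - 2) * α - 1 = 0 := by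
      have hz : D * (α ^ 2 * ((N - 1) * α ^ 2 + (N - 2) * α - 1)) = 0 := by
        rw [hrc] at hkey
        linear_combination hkey
      have hz2 : α ^ 2 * ((N - 1) * α ^ 2 + (N - 2) * α - 1) = 0 :=
        (mul_eq_zero.mp hz).resolve_left hDpos.ne'
      exact (mul_eq_zero.mp hz2).resolve_left (pow_ne_zero 2 hαpos.ne')
    have hfac : (α + 1) * ((N - 1) * α - 1) = 0 := by linear_combination hQ
    have hlin : (N - 1) * α - 1 = 0 := by
      rcases mul_eq_zero.mp hfac with h | h
      · nlinarith
      · exact h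
    have h5 : (N - D - 1) * (1 + α) = 0 := by
      linear_combination hE1R + (1 + D * α) * hlin
    have : N = D + 1 := by
      have h6 := (mul_eq_zero.mp h5).resolve_right (by nlinarith)
      linarith
    rw [hN, hD] at this
    exact_mod_cast this
end
end

section
/- Let Φ = (φ_1,…,φ_n) be a doubly covariant (doubly transitive) equiangular tight frame for ℂ^d with n > d. Then for every triple of distinct indices j, k, ℓ there is a complex number ζ_{j,k,ℓ} with ζ_{j,k,ℓ}^{2n} = 1 such that TP(j,k,ℓ) = ζ_{j,k,ℓ} · ((n−d)/(d(n−1)))^{3/2}. -/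
open scoped ComplexInnerProductSpace

noncomputable section

/-- `φ` is doubly covariant: the symmetry group acts 2-transitively on the indices. -/
def DoublyCovariant {d n : ℕ} (φ : Fin n → EuclideanSpace ℂ (Fin d)) : Prop :=
  ∀ j k j' k' : Fin n, j ≠ k → j' ≠ k' →
    ∃ (U : EuclideanSpace ℂ (Fin d) ≃ₗᵢ[ℂ] EuclideanSpace ℂ (Fin d))
      (σ : Equiv.Perm (Fin n)),
      IsSymmetry φ U σ ∧ σ j = j' ∧ σ k = k'

namespace DCETF

variable {d n : ℕ} {φ : Fin n → EuclideanSpace ℂ (Fin d)}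

/-- Row product. -/
def Rp (φ : Fin n → EuclideanSpace ℂ (Fin d)) (a : Fin n) : ℂ :=
  ∏ m ∈ Finset.univ.erase a, ⟪φ a, φ m⟫

/-- Pair product of triple products. -/
def Pp (φ : Fin n → EuclideanSpace ℂ (Fin d)) (a b : Fin n) : ℂ :=
  ∏ m ∈ (Finset.univ.erase a).erase b, TP φ a m b

lemma tp_conj (φ : Fin n → EuclideanSpace ℂ (Fin d)) (a m b : Fin n) :
    TP φ b m a = (starRingEnd ℂ) (TP φ a m b) := by
  unfold TP
  rw [map_mul, map_mul, ← inner_conj_symm (φ m) (φ a), ← inner_conj_symm (φ b) (φ m),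
    ← inner_conj_symm (φ a) (φ b)]
  ring

lemma phase (hnorm : ∀ j, ‖φ j‖ = 1) {U : EuclideanSpace ℂ (Fin d) ≃ₗᵢ[ℂ] EuclideanSpace ℂ (Fin d)}
    {σ : Equiv.Perm (Fin n)} (h : IsSymmetry φ U σ) (a : Fin n) :
    ∃ μ : ℂ, ‖μ‖ = 1 ∧ U (φ a) = μ • φ (σ a) := by
  have h1 := h a (U (φ a))
  rw [U.symm_apply_apply] at h1
  have h2 : ⟪φ a, φ a⟫ = 1 := by
    rw [inner_self_eq_norm_sq_to_K, hnorm a]; norm_num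
  rw [h2, one_smul] at h1
  refine ⟨⟪φ (σ a), U (φ a)⟫, ?_, h1⟩
  have h3 : ‖U (φ a)‖ = 1 := by rw [U.norm_map, hnorm a]
  have h4 := congrArg norm h1
  rw [norm_smul, hnorm (σ a), mul_one, h3] at h4
  exact h4.symm

lemma tp_invariant (hnorm : ∀ j, ‖φ j‖ = 1)
    {U : EuclideanSpace ℂ (Fin d) ≃ₗᵢ[ℂ] EuclideanSpace ℂ (Fin d)}
    {σ : Equiv.Perm (Fin n)} (h : IsSymmetry φ U σ) (a b c : Fin n) :
    TP φ (σ a) (σ b) (σ c) = TP φ a b c := by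
  obtain ⟨μa, hμa, ha⟩ := phase hnorm h a
  obtain ⟨μb, hμb, hb⟩ := phase hnorm h b
  obtain ⟨μc, hμc, hc⟩ := phase hnorm h c
  have key : ∀ (x y : Fin n) (μx μy : ℂ), U (φ x) = μx • φ (σ x) → U (φ y) = μy • φ (σ y) →
      ⟪φ x, φ y⟫ = (starRingEnd ℂ) μx * μy * ⟪φ (σ x), φ (σ y)⟫ := by
    intro x y μx μy hx hy
    rw [← U.inner_map_map (φ x) (φ y), hx, hy, inner_smul_left, inner_smul_right]; ring
  have ua : (starRingEnd ℂ) μa * μa = 1 := by rw [RCLike.conj_mul, hμa]; norm_num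
  have ub : (starRingEnd ℂ) μb * μb = 1 := by rw [RCLike.conj_mul, hμb]; norm_num
  have uc : (starRingEnd ℂ) μc * μc = 1 := by rw [RCLike.conj_mul, hμc]; norm_num
  have e1 := key a b μa μb ha hb
  have e2 := key b c μb μc hb hc
  have e3 := key c a μc μa hc ha
  unfold TP
  rw [e1, e2, e3]
  linear_combination (-(⟪φ (σ a), φ (σ b)⟫ * ⟪φ (σ b), φ (σ c)⟫ * ⟪φ (σ c), φ (σ a)⟫)) *
    (by rw [ua, ub, uc]; ring :
      ((starRingEnd ℂ) μa * μa) * ((starRingEnd ℂ) μb * μb) * ((starRingEnd ℂ) μc * μc) = 1)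

lemma Pp_invariant (hnorm : ∀ j, ‖φ j‖ = 1)
    {U : EuclideanSpace ℂ (Fin d) ≃ₗᵢ[ℂ] EuclideanSpace ℂ (Fin d)}
    {σ : Equiv.Perm (Fin n)} (h : IsSymmetry φ U σ) (a b : Fin n) :
    Pp φ (σ a) (σ b) = Pp φ a b := by
  unfold Pp
  have himg : (Finset.univ.erase (σ a)).erase (σ b) = ((Finset.univ.erase a).erase b).image σ := by
    ext m
    simp only [Finset.mem_image, Finset.mem_erase, Finset.mem_univ, and_true]
    constructor
    · rintro ⟨h1, h2⟩
      refine ⟨σ.symm m, ⟨?_, ?_⟩, σ.apply_symm_apply m⟩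
      · intro hh; exact h1 (by rw [← σ.apply_symm_apply m, hh])
      · intro hh; exact h2 (by rw [← σ.apply_symm_apply m, hh])
    · rintro ⟨x, ⟨hx1, hx2⟩, rfl⟩
      exact ⟨fun hh => hx1 (σ.injective hh), fun hh => hx2 (σ.injective hh)⟩
  rw [himg, Finset.prod_image (fun x _ y _ hxy => σ.injective hxy)]
  exact Finset.prod_congr rfl fun m _ => tp_invariant hnorm h a m b

end DCETF

/-- For a doubly covariant ETF with `n > d`, every triple product of distinct indices is
a `2n`-th root of unity times `((n−d)/(d(n−1)))^{3/2}`. -/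
theorem doubly_covariant_triple_products {d n : ℕ}
    (φ : Fin n → EuclideanSpace ℂ (Fin d)) (hETF : IsETF d n φ)
    (hcov : DoublyCovariant φ) (hnd : d < n) :
    ∀ j k l : Fin n, j ≠ k → j ≠ l → k ≠ l →
      ∃ ζ : ℂ, ζ ^ (2 * n) = 1 ∧
        TP φ j k l =
          ζ * (((((n : ℝ) - d) / (d * ((n : ℝ) - 1))) ^ ((3 : ℝ) / 2) : ℝ) : ℂ) := by
  intro j k l hjk hjl hkl
  obtain ⟨hframe, hnorm, α, hα0, hα⟩ := hETF
  classical
  have hn3 : 3 ≤ n := by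
    have hcard : ({j, k, l} : Finset (Fin n)).card = 3 := by
      rw [Finset.card_insert_of_notMem (by simp [hjk, hjl]),
        Finset.card_insert_of_notMem (by simp [hkl]), Finset.card_singleton]
    calc 3 = ({j, k, l} : Finset (Fin n)).card := hcard.symm
      _ ≤ Finset.univ.card := Finset.card_le_univ _
      _ = n := by simp
  have hd1 : 1 ≤ d := by
    by_contra hh
    have hd0 : d = 0 := by omega
    subst hd0
    have hz : φ j = 0 := by
      ext i
      exact i.elim0
    have h1 := hnorm j
    rw [hz, norm_zero] at h1
    norm_num at h1
  have hself : ∀ a : Fin n, ⟪φ a, φ a⟫ = 1 := fun a => by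
    rw [inner_self_eq_norm_sq_to_K, hnorm a]; norm_num
  have hcard2 : ∀ a b : Fin n, a ≠ b → ((Finset.univ.erase a).erase b).card = n - 2 := by
    intro a b hab
    rw [Finset.card_erase_of_mem (Finset.mem_erase.2 ⟨hab.symm, Finset.mem_univ b⟩),
      Finset.card_erase_of_mem (Finset.mem_univ a), Finset.card_univ, Fintype.card_fin]
    omega
  -- the value of α²
  have hα2 : α ^ 2 = ((n : ℝ) - d) / (d * ((n : ℝ) - 1)) := by
    have hexp := congrArg (fun x => (⟪φ j, x⟫ : ℂ)) (hframe (φ j))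
    simp only [inner_smul_right, inner_sum] at hexp
    have hsum : ∑ m, ⟪φ m, φ j⟫ * ⟪φ j, φ m⟫ = ((1 + ((n : ℝ) - 1) * α ^ 2 : ℝ) : ℂ) := by
      rw [← Finset.sum_erase_add _ _ (Finset.mem_univ j)]
      have hterm : ∀ m ∈ Finset.univ.erase j,
          ⟪φ m, φ j⟫ * ⟪φ j, φ m⟫ = ((α ^ 2 : ℝ) : ℂ) := by
        intro m hm
        have hmj : j ≠ m := fun hh => (Finset.mem_erase.1 hm).1 hh.symm
        rw [← inner_conj_symm (φ m) (φ j), RCLike.conj_mul, hα j m hmj]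
        push_cast
        rfl
      rw [Finset.sum_congr rfl hterm, Finset.sum_const, hself j,
        Finset.card_erase_of_mem (Finset.mem_univ j), Finset.card_univ, Fintype.card_fin,
        nsmul_eq_mul]
      push_cast [Nat.cast_sub (by omega : 1 ≤ n)]
      ring
    rw [hself j, hsum] at hexp
    have hn0 : (n : ℂ) ≠ 0 := Nat.cast_ne_zero.2 (by omega)
    have hreal : (n : ℝ) = d * (1 + ((n : ℝ) - 1) * α ^ 2) := by
      field_simp at hexp
      exact_mod_cast hexp
    have hd0 : (d : ℝ) ≠ 0 := by
      have h2 : (1 : ℝ) ≤ d := by exact_mod_cast hd1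
      linarith
    have hn1 : (n : ℝ) - 1 ≠ 0 := by
      have h3 : (3 : ℝ) ≤ n := by exact_mod_cast hn3
      linarith
    field_simp
    linear_combination -hreal
  have hαpos : 0 < α := by
    have h1 : 0 < ((n : ℝ) - d) / (d * ((n : ℝ) - 1)) := by
      apply div_pos
      · have h4 : (d : ℝ) < n := by exact_mod_cast hnd
        linarith
      · have h2 : (1 : ℝ) ≤ d := by exact_mod_cast hd1
        have h3 : (3 : ℝ) ≤ n := by exact_mod_cast hn3
        nlinarith
    rw [← hα2] at h1
    rcases hα0.lt_or_eq with h | h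
    · exact h
    · rw [← h] at h1; norm_num at h1
  -- row products
  have hRconj : ∀ a : Fin n,
      DCETF.Rp φ a * (starRingEnd ℂ) (DCETF.Rp φ a) = ((α ^ (2 * (n - 1)) : ℝ) : ℂ) := by
    intro a
    have hRnorm : ‖DCETF.Rp φ a‖ = α ^ (n - 1) := by
      rw [DCETF.Rp, norm_prod,
        Finset.prod_congr rfl
          (fun m hm => hα a m (fun hh => (Finset.mem_erase.1 hm).1 hh.symm)),
        Finset.prod_const, Finset.card_erase_of_mem (Finset.mem_univ a), Finset.card_univ,
        Fintype.card_fin]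
    rw [RCLike.mul_conj, hRnorm]
    push_cast
    rw [← pow_mul, show (n - 1) * 2 = 2 * (n - 1) by ring]
    rfl
  -- the key identity
  have hstar : ∀ a b : Fin n, a ≠ b →
      DCETF.Pp φ a b * ⟪φ a, φ b⟫ ^ n =
        DCETF.Rp φ a * (starRingEnd ℂ) (DCETF.Rp φ b) * ((α ^ (2 * (n - 2)) : ℝ) : ℂ) := by
    intro a b hab
    have hbmem : b ∈ Finset.univ.erase a := Finset.mem_erase.2 ⟨hab.symm, Finset.mem_univ b⟩
    have hamem : a ∈ Finset.univ.erase b := Finset.mem_erase.2 ⟨hab, Finset.mem_univ a⟩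
    have hA : DCETF.Rp φ a = ⟪φ a, φ b⟫ * ∏ m ∈ (Finset.univ.erase a).erase b, ⟪φ a, φ m⟫ :=
      (Finset.mul_prod_erase _ _ hbmem).symm
    have hB : (starRingEnd ℂ) (DCETF.Rp φ b) =
        ⟪φ a, φ b⟫ * ∏ m ∈ (Finset.univ.erase a).erase b, ⟪φ m, φ b⟫ := by
      rw [DCETF.Rp, ← Finset.mul_prod_erase _ _ hamem, map_mul, map_prod,
        inner_conj_symm (φ a) (φ b), Finset.erase_right_comm]
      congr 1
      exact Finset.prod_congr rfl fun m _ => inner_conj_symm (φ m) (φ b)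
    have hee : ⟪φ b, φ a⟫ * ⟪φ a, φ b⟫ = ((α ^ 2 : ℝ) : ℂ) := by
      rw [← inner_conj_symm (φ b) (φ a), RCLike.conj_mul, hα a b hab]
      push_cast
      rfl
    have hfe : (⟪φ b, φ a⟫ * ⟪φ a, φ b⟫) ^ (n - 2) = ((α ^ (2 * (n - 2)) : ℝ) : ℂ) := by
      rw [hee]
      push_cast
      rw [← pow_mul]
    have hPp : DCETF.Pp φ a b =
        (∏ m ∈ (Finset.univ.erase a).erase b, ⟪φ a, φ m⟫) *
          (∏ m ∈ (Finset.univ.erase a).erase b, ⟪φ m, φ b⟫) * ⟪φ b, φ a⟫ ^ (n - 2) := by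
      rw [DCETF.Pp]
      simp only [TP]
      rw [Finset.prod_mul_distrib, Finset.prod_mul_distrib, Finset.prod_const, hcard2 a b hab]
    have hsplit : ⟪φ a, φ b⟫ ^ n = ⟪φ a, φ b⟫ ^ (n - 2) * ⟪φ a, φ b⟫ ^ 2 := by
      rw [← pow_add, show n - 2 + 2 = n by omega]
    rw [hPp, hA, hB, hsplit, ← hfe, mul_pow]
    ring
  -- P is constant over pairs and real
  have hPinv : ∀ a b a' b' : Fin n, a ≠ b → a' ≠ b' → DCETF.Pp φ a b = DCETF.Pp φ a' b' := by
    intro a b a' b' h1 h2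
    obtain ⟨U, σ, hsym, hσ1, hσ2⟩ := hcov a b a' b' h1 h2
    rw [← hσ1, ← hσ2, DCETF.Pp_invariant hnorm hsym]
  have hPconj : DCETF.Pp φ k j = (starRingEnd ℂ) (DCETF.Pp φ j k) := by
    rw [DCETF.Pp, DCETF.Pp, map_prod, Finset.erase_right_comm]
    exact Finset.prod_congr rfl fun m _ => DCETF.tp_conj φ j m k
  have hPreal : DCETF.Pp φ j k = (((DCETF.Pp φ j k).re : ℝ) : ℂ) := by
    have h1 : (starRingEnd ℂ) (DCETF.Pp φ j k) = DCETF.Pp φ j k := by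
      rw [← hPconj]
      exact hPinv k j j k hjk.symm hjk
    exact (Complex.conj_eq_iff_re.1 h1).symm
  have hPnorm : ‖DCETF.Pp φ j k‖ = α ^ (3 * (n - 2)) := by
    rw [DCETF.Pp, norm_prod]
    have hterm : ∀ m ∈ (Finset.univ.erase j).erase k, ‖TP φ j m k‖ = α ^ 3 := by
      intro m hm
      have h1 := Finset.mem_erase.1 hm
      have h2 := Finset.mem_erase.1 h1.2
      simp only [TP]
      rw [norm_mul, norm_mul, hα j m (fun hh => h2.1 hh.symm), hα m k h1.1, hα k j hjk.symm]
      ring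
    rw [Finset.prod_congr rfl hterm, Finset.prod_const, hcard2 j k hjk, ← pow_mul]
  have hP2 : (DCETF.Pp φ j k) ^ 2 = ((α ^ (6 * (n - 2)) : ℝ) : ℂ) := by
    have habs : |(DCETF.Pp φ j k).re| = α ^ (3 * (n - 2)) := by
      rw [← Real.norm_eq_abs, ← Complex.norm_real, ← hPreal, hPnorm]
    have habs : |(DCETF.Pp φ j k).re| = α ^ (3 * (n - 2)) := by
      rw [← Real.norm_eq_abs, ← Complex.norm_real, ← hPreal, hPnorm]
    have hre2 : ((DCETF.Pp φ j k).re) ^ 2 = α ^ (6 * (n - 2)) := by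
      calc ((DCETF.Pp φ j k).re) ^ 2 = |(DCETF.Pp φ j k).re| ^ 2 := (sq_abs _).symm
        _ = (α ^ (3 * (n - 2))) ^ 2 := by rw [habs]
        _ = α ^ (6 * (n - 2)) := by rw [← pow_mul, show 3 * (n - 2) * 2 = 6 * (n - 2) by omega]
    rw [hPreal]
    norm_cast
  -- multiply the key identity over the three pairs of the triangle
  have hprod : (DCETF.Pp φ j k) ^ 3 * (TP φ j k l) ^ n = ((α ^ (12 * n - 18) : ℝ) : ℂ) := by
    have E1 := hstar j k hjk
    have E2 := hstar k l hkl
    have E3 := hstar l j (fun h => hjl h.symm)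
    calc (DCETF.Pp φ j k) ^ 3 * (TP φ j k l) ^ n
        = (DCETF.Pp φ j k * ⟪φ j, φ k⟫ ^ n) * (DCETF.Pp φ k l * ⟪φ k, φ l⟫ ^ n) *
            (DCETF.Pp φ l j * ⟪φ l, φ j⟫ ^ n) := by
          rw [hPinv k l j k hkl hjk, hPinv l j j k (fun h => hjl h.symm) hjk]
          simp only [TP]
          rw [mul_pow, mul_pow]
          ring
      _ = (DCETF.Rp φ j * (starRingEnd ℂ) (DCETF.Rp φ k) * ((α ^ (2 * (n - 2)) : ℝ) : ℂ)) *
            (DCETF.Rp φ k * (starRingEnd ℂ) (DCETF.Rp φ l) * ((α ^ (2 * (n - 2)) : ℝ) : ℂ)) *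
            (DCETF.Rp φ l * (starRingEnd ℂ) (DCETF.Rp φ j) * ((α ^ (2 * (n - 2)) : ℝ) : ℂ)) := by
          rw [E1, E2, E3]
      _ = (DCETF.Rp φ j * (starRingEnd ℂ) (DCETF.Rp φ j)) *
            ((DCETF.Rp φ k * (starRingEnd ℂ) (DCETF.Rp φ k)) *
              ((DCETF.Rp φ l * (starRingEnd ℂ) (DCETF.Rp φ l)) *
                (((α ^ (2 * (n - 2)) : ℝ) : ℂ) * ((α ^ (2 * (n - 2)) : ℝ) : ℂ) *
                  ((α ^ (2 * (n - 2)) : ℝ) : ℂ)))) := by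
          ring
      _ = ((α ^ (12 * n - 18) : ℝ) : ℂ) := by
          rw [hRconj j, hRconj k, hRconj l]
          obtain ⟨q, rfl⟩ : ∃ q, n = q + 3 := ⟨n - 3, by omega⟩
          simp only [show q + 3 - 1 = q + 2 by omega, show q + 3 - 2 = q + 1 by omega,
            show 12 * (q + 3) - 18 = 12 * q + 18 by omega]
          push_cast
          ring
  have hTPsq : ((TP φ j k l) ^ n) ^ 2 = ((α ^ (6 * n) : ℝ) : ℂ) := by
    have hne : ((α ^ (18 * (n - 2)) : ℝ) : ℂ) ≠ 0 := by
      simp only [ne_eq, Complex.ofReal_eq_zero]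
      exact pow_ne_zero _ (ne_of_gt hαpos)
    apply mul_left_cancel₀ hne
    calc ((α ^ (18 * (n - 2)) : ℝ) : ℂ) * ((TP φ j k l) ^ n) ^ 2
        = ((DCETF.Pp φ j k) ^ 2) ^ 3 * ((TP φ j k l) ^ n) ^ 2 := by
          rw [hP2]
          congr 1
          push_cast
          rw [← pow_mul, show 6 * (n - 2) * 3 = 18 * (n - 2) by omega]
      _ = ((DCETF.Pp φ j k) ^ 3 * (TP φ j k l) ^ n) ^ 2 := by ring
      _ = (((α ^ (12 * n - 18) : ℝ) : ℂ)) ^ 2 := by rw [hprod]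
      _ = ((α ^ (18 * (n - 2)) : ℝ) : ℂ) * ((α ^ (6 * n) : ℝ) : ℂ) := by
          obtain ⟨q, rfl⟩ : ∃ q, n = q + 3 := ⟨n - 3, by omega⟩
          simp only [show 12 * (q + 3) - 18 = 12 * q + 18 by omega,
            show 18 * (q + 3 - 2) = 18 * q + 18 by omega]
          push_cast
          ring
  -- conclude
  have hα3ne : ((α ^ 3 : ℝ) : ℂ) ≠ 0 := by
    simp only [ne_eq, Complex.ofReal_eq_zero]
    exact pow_ne_zero _ (ne_of_gt hαpos)
  refine ⟨TP φ j k l / ((α ^ 3 : ℝ) : ℂ), ?_, ?_⟩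
  · rw [div_pow]
    have hnum : (TP φ j k l) ^ (2 * n) = ((α ^ (6 * n) : ℝ) : ℂ) := by
      rw [mul_comm 2 n, pow_mul]
      exact hTPsq
    have hden : (((α ^ 3 : ℝ) : ℂ)) ^ (2 * n) = ((α ^ (6 * n) : ℝ) : ℂ) := by
      push_cast
      rw [← pow_mul, show 3 * (2 * n) = 6 * n by ring]
    rw [hnum, hden, div_self]
    simp only [ne_eq, Complex.ofReal_eq_zero]
    exact pow_ne_zero _ (ne_of_gt hαpos)
  · have hcoef : ((((n : ℝ) - d) / (d * ((n : ℝ) - 1))) ^ ((3 : ℝ) / 2) : ℝ) = α ^ 3 := by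
      rw [← hα2, ← Real.rpow_natCast α 2, ← Real.rpow_natCast α 3, ← Real.rpow_mul hα0]
      norm_num
    rw [hcoef]
    exact (div_mul_cancel₀ _ hα3ne).symm
end
end

section
/- Let Φ = (φ_1,…,φ_n) be a doubly covariant (doubly transitive) equiangular tight frame for ℂ^d with n > d. Then there exists ε ∈ {1, −1}, independent of the choice of indices, such that for every pair of distinct indices j ≠ k, the product over all m from 1 to n of the normalized triple products T̃P(m,j,k) equals ε. -/
open scoped ComplexInnerProductSpace

noncomputable section

/-- The normalized triple product `T̃P(j,k,ℓ) = TP(j,k,ℓ)/|TP(j,k,ℓ)|`. -/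
def nTP {d n : ℕ} (φ : Fin n → EuclideanSpace ℂ (Fin d)) (j k l : Fin n) : ℂ :=
  TP φ j k l / ((‖TP φ j k l‖ : ℝ) : ℂ)

/-- Conjugating a triple product swaps the last two indices. -/
lemma TP_conj {d n : ℕ} (φ : Fin n → EuclideanSpace ℂ (Fin d)) (m j k : Fin n) :
    TP φ m k j = (starRingEnd ℂ) (TP φ m j k) := by
  simp only [TP, map_mul, inner_conj_symm]
  ring

lemma nTP_conj {d n : ℕ} (φ : Fin n → EuclideanSpace ℂ (Fin d)) (m j k : Fin n) :
    nTP φ m k j = (starRingEnd ℂ) (nTP φ m j k) := by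
  simp only [nTP, TP_conj φ m j k, map_div₀, Complex.conj_ofReal, RCLike.norm_conj]

/-- A symmetry rescales each vector by a nonzero phase, leading to a cocycle relation
for inner products. -/
lemma symmetry_inner_rel {d n : ℕ} (φ : Fin n → EuclideanSpace ℂ (Fin d))
    (hnorm : ∀ j, ‖φ j‖ = 1)
    (U : EuclideanSpace ℂ (Fin d) ≃ₗᵢ[ℂ] EuclideanSpace ℂ (Fin d))
    (σ : Equiv.Perm (Fin n)) (h : IsSymmetry φ U σ) :
    ∃ c : Fin n → ℂ, (∀ j, c j ≠ 0) ∧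
      ∀ j k, c j * ⟪φ j, φ k⟫ = c k * ⟪φ (σ j), φ (σ k)⟫ := by
  have hφne : ∀ j, φ j ≠ 0 := by
    intro j hj
    have := hnorm j
    rw [hj, norm_zero] at this
    norm_num at this
  have hself : ∀ j, ⟪φ j, φ j⟫ = (1 : ℂ) := by
    intro j
    rw [inner_self_eq_norm_sq_to_K, hnorm j]
    norm_num
  have hU : ∀ j, U (φ j) = ⟪φ (σ j), U (φ j)⟫ • φ (σ j) := by
    intro j
    have h1 := h j (U (φ j))
    rwa [U.symm_apply_apply, hself j, one_smul] at h1
  refine ⟨fun j => ⟪φ (σ j), U (φ j)⟫, ?_, ?_⟩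
  · intro j hc
    change ⟪φ (σ j), U (φ j)⟫ = 0 at hc
    have h1 := hU j
    rw [hc, zero_smul] at h1
    exact hφne j (by simpa using congrArg U.symm h1)
  · intro j k
    show ⟪φ (σ j), U (φ j)⟫ * ⟪φ j, φ k⟫ = ⟪φ (σ k), U (φ k)⟫ * ⟪φ (σ j), φ (σ k)⟫
    have h2 := h j (U (φ k))
    rw [U.symm_apply_apply, map_smul, hU j, smul_smul] at h2
    rw [hU k, inner_smul_right] at h2
    have h3 := smul_left_injective ℂ (hφne (σ j)) h2
    rw [mul_comm] at h3
    exact h3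

/-- Triple products are invariant under symmetries. -/
lemma TP_symm {d n : ℕ} (φ : Fin n → EuclideanSpace ℂ (Fin d))
    (hnorm : ∀ j, ‖φ j‖ = 1)
    (U : EuclideanSpace ℂ (Fin d) ≃ₗᵢ[ℂ] EuclideanSpace ℂ (Fin d))
    (σ : Equiv.Perm (Fin n)) (h : IsSymmetry φ U σ) (j k l : Fin n) :
    TP φ (σ j) (σ k) (σ l) = TP φ j k l := by
  obtain ⟨c, hc0, hc⟩ := symmetry_inner_rel φ hnorm U σ h
  have h1 := hc j k
  have h2 := hc k l
  have h3 := hc l j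
  have key : (c j * c k * c l) * TP φ j k l = (c j * c k * c l) * TP φ (σ j) (σ k) (σ l) := by
    simp only [TP]
    linear_combination (c k * ⟪φ k, φ l⟫ * (c l * ⟪φ l, φ j⟫)) * h1 +
      (c k * ⟪φ (σ j), φ (σ k)⟫ * (c l * ⟪φ l, φ j⟫)) * h2 +
      (c k * ⟪φ (σ j), φ (σ k)⟫ * (c l * ⟪φ (σ k), φ (σ l)⟫)) * h3
  have hne : c j * c k * c l ≠ 0 := mul_ne_zero (mul_ne_zero (hc0 j) (hc0 k)) (hc0 l)
  exact (mul_left_cancel₀ hne key).symm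

lemma nTP_symm {d n : ℕ} (φ : Fin n → EuclideanSpace ℂ (Fin d))
    (hnorm : ∀ j, ‖φ j‖ = 1)
    (U : EuclideanSpace ℂ (Fin d) ≃ₗᵢ[ℂ] EuclideanSpace ℂ (Fin d))
    (σ : Equiv.Perm (Fin n)) (h : IsSymmetry φ U σ) (j k l : Fin n) :
    nTP φ (σ j) (σ k) (σ l) = nTP φ j k l := by
  simp only [nTP, TP_symm φ hnorm U σ h]

/-- For a doubly covariant ETF with `n > d`, there is a sign `ε = ±1`, independent of the
indices, such that `∏_{m=1}^n T̃P(m,j,k) = ε` for all `j ≠ k`. -/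
theorem doubly_covariant_sign {d n : ℕ}
    (φ : Fin n → EuclideanSpace ℂ (Fin d)) (hETF : IsETF d n φ)
    (hcov : DoublyCovariant φ) (hnd : d < n) :
    ∃ ε : ℂ, (ε = 1 ∨ ε = -1) ∧
      ∀ j k : Fin n, j ≠ k → ∏ m, nTP φ m j k = ε := by
  obtain ⟨hframe, hnorm, α, hα0, hαeq⟩ := hETF
  by_cases hn2 : n < 2
  · refine ⟨1, Or.inl rfl, fun j k hjk => absurd ?_ hjk⟩
    have hj := j.isLt
    have hk := k.isLt
    exact Fin.ext (by omega)
  push_neg at hn2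
  -- α is positive since n > d
  have hαpos : 0 < α := by
    rcases lt_or_eq_of_le hα0 with h | h
    · exact h
    · exfalso
      have horth : Orthonormal ℂ φ := by
        refine ⟨hnorm, fun {i j} hij => ?_⟩
        have := hαeq i j hij
        rw [← h] at this
        exact norm_eq_zero.mp this
      have hli := horth.linearIndependent
      have hcard := hli.fintype_card_le_finrank
      simp [finrank_euclideanSpace_fin] at hcard
      omega
  -- triple products are nonzero when the last two indices differ
  have hTPne : ∀ m j k : Fin n, j ≠ k → TP φ m j k ≠ 0 := by
    intro m j k hjk
    have hgen : ∀ a b : Fin n, ⟪φ a, φ b⟫ ≠ 0 ∨ a = b := by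
      intro a b
      by_cases hab : a = b
      · exact Or.inr hab
      · left
        intro h0
        have := hαeq a b hab
        rw [h0, norm_zero] at this
        exact absurd this.symm (ne_of_gt hαpos)
    have hself : ∀ a : Fin n, ⟪φ a, φ a⟫ ≠ (0 : ℂ) := by
      intro a
      rw [inner_self_eq_norm_sq_to_K, hnorm a]
      norm_num
    have h1 : ⟪φ m, φ j⟫ ≠ 0 := by
      rcases hgen m j with h | h
      · exact h
      · rw [h]; exact hself j
    have h2 : ⟪φ j, φ k⟫ ≠ 0 := by
      rcases hgen j k with h | h
      · exact h
      · exact absurd h hjk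
    have h3 : ⟪φ k, φ m⟫ ≠ 0 := by
      rcases hgen k m with h | h
      · exact h
      · rw [h]; exact hself m
    exact mul_ne_zero (mul_ne_zero h1 h2) h3
  -- each normalized triple product has norm 1
  have hnTPnorm : ∀ m j k : Fin n, j ≠ k → ‖nTP φ m j k‖ = 1 := by
    intro m j k hjk
    have hne := hTPne m j k hjk
    rw [nTP, norm_div, Complex.norm_real, Real.norm_eq_abs,
      abs_of_nonneg (norm_nonneg _), div_self (norm_ne_zero_iff.mpr hne)]
  -- the product is constant over distinct pairs
  have hconst : ∀ j k j' k' : Fin n, j ≠ k → j' ≠ k' →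
      ∏ m, nTP φ m j k = ∏ m, nTP φ m j' k' := by
    intro j k j' k' hjk hjk'
    obtain ⟨U, σ, hsym, hσj, hσk⟩ := hcov j k j' k' hjk hjk'
    calc ∏ m, nTP φ m j k = ∏ m, nTP φ (σ m) (σ j) (σ k) := by
          refine Finset.prod_congr rfl fun m _ => ?_
          exact (nTP_symm φ hnorm U σ hsym m j k).symm
      _ = ∏ m, nTP φ m (σ j) (σ k) := Equiv.prod_comp σ (fun m => nTP φ m (σ j) (σ k))
      _ = ∏ m, nTP φ m j' k' := by rw [hσj, hσk]
  -- pick a reference pair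
  have h0 : (0 : ℕ) < n := by omega
  have h1 : (1 : ℕ) < n := by omega
  set j₀ : Fin n := ⟨0, h0⟩
  set k₀ : Fin n := ⟨1, h1⟩
  have hj₀k₀ : j₀ ≠ k₀ := by
    intro h
    have := congrArg Fin.val h
    simp [j₀, k₀] at this
  set ε : ℂ := ∏ m, nTP φ m j₀ k₀ with hε
  -- ε is real: ε = conj ε
  have hconj : (starRingEnd ℂ) ε = ε := by
    have h2 : (starRingEnd ℂ) ε = ∏ m, nTP φ m k₀ j₀ := by
      rw [hε, map_prod]
      exact Finset.prod_congr rfl fun m _ => (nTP_conj φ m j₀ k₀).symm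
    rw [h2]
    exact hconst k₀ j₀ j₀ k₀ hj₀k₀.symm hj₀k₀
  -- ε has norm 1
  have hnormε : ‖ε‖ = 1 := by
    rw [hε, norm_prod]
    rw [Finset.prod_congr rfl fun m _ => hnTPnorm m j₀ k₀ hj₀k₀]
    simp
  have hre : ε = ((ε.re : ℝ) : ℂ) := (Complex.conj_eq_iff_re.mp hconj).symm
  have habs : |ε.re| = 1 := by
    rw [hre] at hnormε
    rwa [Complex.norm_real, Real.norm_eq_abs] at hnormε
  refine ⟨ε, ?_, fun j k hjk => hconst j k j₀ k₀ hjk hj₀k₀⟩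
  rcases abs_eq (by norm_num : (0:ℝ) ≤ 1) |>.mp habs with h | h
  · left; rw [hre, h]; norm_num
  · right; rw [hre, h]; norm_num
end
end

section
/- (Welch bound) Let φ_1,…,φ_n be unit vectors in ℂ^d with n ≥ 2 and n ≥ d. Then max_{j ≠ k} |⟨φ_j,φ_k⟩| ≥ √((n−d)/(d(n−1))). -/
open scoped ComplexInnerProductSpace

noncomputable section

lemma offDiag_univ_nonempty {n : ℕ} (hn : 2 ≤ n) :
    ((Finset.univ : Finset (Fin n)).offDiag).Nonempty := by
  refine ⟨(⟨0, by omega⟩, ⟨1, by omega⟩), ?_⟩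
  simp [Finset.mem_offDiag, Fin.ext_iff]

/-- The Welch bound: for unit vectors `φ_1, …, φ_n` in `ℂ^d` with `n ≥ 2` and `n ≥ d`,
`max_{j ≠ k} |⟨φ_j, φ_k⟩| ≥ √((n−d)/(d(n−1)))`. -/
theorem welch_bound {d n : ℕ} (hn : 2 ≤ n) (hdn : d ≤ n)
    (φ : Fin n → EuclideanSpace ℂ (Fin d)) (hφ : ∀ j, ‖φ j‖ = 1) :
    Real.sqrt (((n : ℝ) - d) / (d * ((n : ℝ) - 1))) ≤
      (Finset.univ.offDiag).sup' (offDiag_univ_nonempty hn)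
        (fun p => ‖⟪φ p.1, φ p.2⟫‖) := by
  classical
  set M := (Finset.univ.offDiag).sup' (offDiag_univ_nonempty hn)
      (fun p : Fin n × Fin n => ‖⟪φ p.1, φ p.2⟫‖) with hMdef
  obtain ⟨p0, hp0⟩ := offDiag_univ_nonempty hn
  have hM0 : 0 ≤ M := le_trans (norm_nonneg ⟪φ p0.1, φ p0.2⟫)
    (Finset.le_sup' (fun p : Fin n × Fin n => ‖⟪φ p.1, φ p.2⟫‖) hp0)
  rw [← Real.sqrt_sq hM0]
  apply Real.sqrt_le_sqrt
  rcases Nat.eq_zero_or_pos d with hd | hd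
  · rw [hd]
    push_cast
    rw [zero_mul, div_zero]
    positivity
  -- main case
  have hdpos : (0:ℝ) < d := by exact_mod_cast hd
  have hnR : (2:ℝ) ≤ (n:ℝ) := by exact_mod_cast hn
  have hdnR : (d:ℝ) ≤ (n:ℝ) := by exact_mod_cast hdn
  -- key inequality
  have key : (n:ℝ)^2 ≤ d * ∑ j, ∑ k, ‖⟪φ j, φ k⟫‖^2 := by
    let v : Fin n → EuclideanSpace ℂ (Fin d × Fin d) :=
      fun j => WithLp.toLp 2 (fun p : Fin d × Fin d => φ j p.1 * (starRingEnd ℂ) (φ j p.2))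
    let w : EuclideanSpace ℂ (Fin d × Fin d) := WithLp.toLp 2 (fun p : Fin d × Fin d => if p.1 = p.2 then 1 else 0)
    set V : EuclideanSpace ℂ (Fin d × Fin d) := ∑ j, v j with hV
    have hvv : ∀ j k, ⟪v j, v k⟫ = ⟪φ j, φ k⟫ * (starRingEnd ℂ) ⟪φ j, φ k⟫ := by
      intro j k
      simp only [v, PiLp.inner_apply, PiLp.toLp_apply, Fintype.sum_prod_type, map_mul, map_sum,
        RingHomCompTriple.comp_apply, RCLike.inner_apply, Finset.sum_mul, Finset.mul_sum,
        starRingEnd_self_apply]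
      rw [Finset.sum_comm]
      refine Finset.sum_congr rfl fun a _ => Finset.sum_congr rfl fun b _ => ?_
      ring
    have hwv : ∀ j, ⟪w, v j⟫ = 1 := by
      intro j
      have h1 : ⟪w, v j⟫ = ⟪φ j, φ j⟫ := by
        simp only [w, v, PiLp.inner_apply, PiLp.toLp_apply, Fintype.sum_prod_type, RCLike.inner_apply,
          apply_ite (starRingEnd ℂ), map_one, map_zero, ite_mul, one_mul, zero_mul, mul_ite, mul_one, mul_zero,
          Finset.sum_ite_eq, Finset.mem_univ, if_true]
      rw [h1, inner_self_eq_norm_sq_to_K, hφ j]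
      norm_num
    have hwV : ⟪w, V⟫ = (n : ℂ) := by
      rw [hV, inner_sum]
      simp [hwv]
    have hww : ‖w‖^2 = (d:ℝ) := by
      rw [EuclideanSpace.norm_sq_eq, Fintype.sum_prod_type]
      simp [w, PiLp.inner_apply, Fintype.sum_prod_type, RCLike.inner_apply,
        apply_ite (starRingEnd ℂ), apply_ite (fun z : ℂ => ‖z‖ ^ 2), Finset.sum_ite_eq]
    have hVV : ‖V‖^2 = ∑ j, ∑ k, ‖⟪φ j, φ k⟫‖^2 := by
      rw [@norm_sq_eq_re_inner ℂ, hV, sum_inner]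
      simp only [inner_sum, hvv, Complex.mul_conj']
      simp [← Complex.ofReal_pow]
    have h1 : (n:ℝ) ≤ ‖w‖ * ‖V‖ := by
      have := norm_inner_le_norm (𝕜 := ℂ) w V
      rwa [hwV, Complex.norm_natCast] at this
    have h2 : (n:ℝ)^2 ≤ (‖w‖ * ‖V‖)^2 := by
      apply pow_le_pow_left₀ (by positivity) h1
    rw [mul_pow, hww, hVV] at h2
    exact h2
  -- split the double sum
  have hdiag : ∀ j : Fin n, ‖⟪φ j, φ j⟫‖^2 = 1 := by
    intro j
    rw [inner_self_eq_norm_sq_to_K, hφ j]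
    norm_num
  have hsplit : ∑ j, ∑ k, ‖⟪φ j, φ k⟫‖^2
      = (n:ℝ) + ∑ p ∈ Finset.univ.offDiag, ‖⟪φ p.1, φ p.2⟫‖^2 := by
    rw [← Finset.sum_product']
    rw [← Finset.diag_union_offDiag,
      Finset.sum_union (Finset.disjoint_diag_offDiag _), Finset.sum_diag]
    congr 1
    rw [Finset.sum_congr rfl (fun j _ => hdiag j)]
    simp
  have hbound : ∑ p ∈ Finset.univ.offDiag, ‖⟪φ p.1, φ p.2⟫‖^2 ≤ (n*n - n : ℕ) * M^2 := by
    have := Finset.sum_le_card_nsmul Finset.univ.offDiag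
        (fun p : Fin n × Fin n => ‖⟪φ p.1, φ p.2⟫‖^2) (M^2)
        (fun p hp => pow_le_pow_left₀ (norm_nonneg _)
          (Finset.le_sup' (fun p : Fin n × Fin n => ‖⟪φ p.1, φ p.2⟫‖) hp) 2)
    simpa [Finset.offDiag_card, nsmul_eq_mul] using this
  have hcast : ((n*n - n : ℕ) : ℝ) = (n:ℝ)*(n:ℝ) - n := by
    have : n ≤ n * n := Nat.le_mul_of_pos_left n (by omega)
    push_cast [this]
    ring
  rw [hcast] at hbound
  rw [div_le_iff₀ (by nlinarith)]
  nlinarith [key, hsplit, hbound, sq_nonneg M, hM0]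
end
end

section
/- Let φ_1,…,φ_n be unit vectors in ℂ^d with n ≥ 2 and n ≥ d. Then equality max_{j ≠ k} |⟨φ_j,φ_k⟩| = √((n−d)/(d(n−1))) holds if and only if (φ_1,…,φ_n) is an equiangular tight frame for ℂ^d. -/
open scoped ComplexInnerProductSpace

noncomputable section

local notation "conj" => starRingEnd ℂ

lemma swap4 {α β γ δ M : Type*} [Fintype α] [Fintype β] [Fintype γ] [Fintype δ]
    [AddCommMonoid M] (f : α → β → γ → δ → M) :
    ∑ i, ∑ i', ∑ j, ∑ k, f i i' j k = ∑ j, ∑ k, ∑ i, ∑ i', f i i' j k := by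
  calc ∑ i, ∑ i', ∑ j, ∑ k, f i i' j k
      = ∑ i, ∑ j, ∑ i', ∑ k, f i i' j k := Finset.sum_congr rfl (fun i _ => Finset.sum_comm)
    _ = ∑ j, ∑ i, ∑ i', ∑ k, f i i' j k := Finset.sum_comm
    _ = ∑ j, ∑ i, ∑ k, ∑ i', f i i' j k := Finset.sum_congr rfl (fun j _ =>
          Finset.sum_congr rfl (fun i _ => Finset.sum_comm))
    _ = ∑ j, ∑ k, ∑ i, ∑ i', f i i' j k := Finset.sum_congr rfl (fun j _ => Finset.sum_comm)

lemma sum4 (n d : ℕ) (a : Fin n → Fin d → ℂ) :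
    ∑ i, ∑ i', (∑ j, a j i * conj (a j i')) * conj (∑ j, a j i * conj (a j i'))
      = ∑ j, ∑ k, (∑ i, conj (a j i) * a k i) * conj (∑ i, conj (a j i) * a k i) := by
  have L : ∀ i i' : Fin d, (∑ j, a j i * conj (a j i')) * conj (∑ j, a j i * conj (a j i'))
      = ∑ j, ∑ k, a j i * conj (a j i') * (conj (a k i) * a k i') := by
    intro i i'
    rw [map_sum, Finset.sum_mul_sum]
    simp [map_mul, mul_comm]
  have R : ∀ j k : Fin n, (∑ i, conj (a j i) * a k i) * conj (∑ i, conj (a j i) * a k i)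
      = ∑ i, ∑ i', a j i' * conj (a j i) * (conj (a k i') * a k i) := by
    intro j k
    rw [map_sum, Finset.sum_mul_sum]
    apply Finset.sum_congr rfl; intro i _
    apply Finset.sum_congr rfl; intro i' _
    simp only [map_mul, Complex.conj_conj]
    ring
  simp only [L, R]
  rw [swap4]
  exact Finset.sum_congr rfl (fun j _ => Finset.sum_congr rfl (fun k _ => Finset.sum_comm))

def Smat {d n : ℕ} (φ : Fin n → EuclideanSpace ℂ (Fin d)) (i i' : Fin d) : ℂ :=
  ∑ j, φ j i * conj (φ j i')

variable {d n : ℕ} (φ : Fin n → EuclideanSpace ℂ (Fin d))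

lemma inner_eq' {d : ℕ} (x y : EuclideanSpace ℂ (Fin d)) :
    ⟪x, y⟫ = ∑ i, conj (x i) * y i := by
  simp [PiLp.inner_apply, RCLike.inner_apply]
  exact Finset.sum_congr rfl fun i _ => mul_comm _ _

lemma inner_eq (j k : Fin n) : ⟪φ j, φ k⟫ = ∑ i, conj (φ j i) * φ k i :=
  inner_eq' _ _

lemma trace_S (hφ : ∀ j, ‖φ j‖ = 1) : ∑ i, Smat φ i i = (n : ℂ) := by
  unfold Smat
  rw [Finset.sum_comm]
  have h : ∀ j : Fin n, ∑ i, φ j i * conj (φ j i) = 1 := by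
    intro j
    have h1 : ⟪φ j, φ j⟫ = (1 : ℂ) := by
      rw [inner_self_eq_norm_sq_to_K, hφ j]; norm_num
    rw [inner_eq] at h1
    rw [← h1]
    exact Finset.sum_congr rfl fun i _ => mul_comm _ _
  simp [h]

lemma trace_S_sq :
    ∑ i, ∑ i', Complex.normSq (Smat φ i i') = ∑ j, ∑ k, ‖⟪φ j, φ k⟫‖ ^ 2 := by
  have h := congrArg Complex.re (sum4 n d (fun j i => φ j i))
  simp only [Complex.re_sum] at h
  calc ∑ i, ∑ i', Complex.normSq (Smat φ i i')
      = ∑ i, ∑ i', ((Smat φ i i') * conj (Smat φ i i')).re := by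
        apply Finset.sum_congr rfl; intro i _; apply Finset.sum_congr rfl; intro i' _
        rw [Complex.mul_conj]; exact (Complex.ofReal_re _).symm
    _ = ∑ j, ∑ k, ((⟪φ j, φ k⟫) * conj (⟪φ j, φ k⟫)).re := by
        simp only [Smat, inner_eq]; exact h
    _ = ∑ j, ∑ k, ‖⟪φ j, φ k⟫‖ ^ 2 := by
        apply Finset.sum_congr rfl; intro j _; apply Finset.sum_congr rfl; intro k _
        rw [Complex.mul_conj, Complex.ofReal_re, ← Complex.sq_norm]

lemma Fr_eq (hφ : ∀ j, ‖φ j‖ = 1) (hd : d ≠ 0) :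
    ∑ i, ∑ i', Complex.normSq (Smat φ i i' - (if i = i' then (((n:ℝ)/d : ℝ) : ℂ) else 0))
      = (∑ j, ∑ k, ‖⟪φ j, φ k⟫‖ ^ 2) - (n:ℝ)^2 / d := by
  set c : ℝ := (n:ℝ)/d with hc
  have hre : ∑ i, (Smat φ i i).re = (n : ℝ) := by
    have := congrArg Complex.re (trace_S φ hφ)
    simpa [Complex.re_sum] using this
  have expand : ∀ i i' : Fin d,
      Complex.normSq (Smat φ i i' - (if i = i' then (c : ℂ) else 0))
        = Complex.normSq (Smat φ i i') - (if i = i' then 2*c*(Smat φ i i').re - c^2 else 0) := by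
    intro i i'
    by_cases h : i = i'
    · simp only [h, if_true]
      simp [Complex.normSq_apply, Complex.sub_re, Complex.sub_im, Complex.ofReal_re,
        Complex.ofReal_im]
      ring
    · simp [h]
  simp only [expand, Finset.sum_sub_distrib]
  rw [trace_S_sq φ]
  congr 1
  have : ∀ i : Fin d, ∑ i' : Fin d, (if i = i' then 2*c*(Smat φ i i').re - c^2 else 0)
      = 2*c*(Smat φ i i).re - c^2 := by
    intro i
    rw [Finset.sum_ite_eq _ i (fun i' => 2*c*(Smat φ i i').re - c^2)]
    simp
  simp only [this, Finset.sum_sub_distrib, ← Finset.mul_sum, hre, Finset.sum_const,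
    Finset.card_univ, Fintype.card_fin, nsmul_eq_mul]
  have hd' : (d:ℝ) ≠ 0 := Nat.cast_ne_zero.mpr hd
  rw [hc]
  field_simp
  ring


lemma apply_smul_sum (i : Fin d) (c : ℂ) (w : Fin n → ℂ) :
    ((c • ∑ j, w j • φ j) i) = c * ∑ j, w j * φ j i := by
  rw [PiLp.smul_apply, WithLp.ofLp_sum, Finset.sum_apply i Finset.univ (fun j => (w j • φ j).ofLp), smul_eq_mul]
  congr 1

lemma tight_iff (hd : d ≠ 0) (hn : n ≠ 0) :
    (∀ x : EuclideanSpace ℂ (Fin d), x = ((d:ℂ)/(n:ℂ)) • ∑ j, ⟪φ j, x⟫ • φ j)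
      ↔ ∀ i i', Smat φ i i' = (if i = i' then (((n:ℝ)/d : ℝ) : ℂ) else 0) := by
  have hd' : (d:ℂ) ≠ 0 := Nat.cast_ne_zero.mpr hd
  have hn' : (n:ℂ) ≠ 0 := Nat.cast_ne_zero.mpr hn
  have hcast : ((((n:ℝ)/d : ℝ)) : ℂ) = (n:ℂ)/(d:ℂ) := by push_cast; ring
  constructor
  · intro h i i'
    have hx := congrFun (congrArg WithLp.ofLp (h (EuclideanSpace.single i' 1))) i
    have h1 : (EuclideanSpace.single i' (1:ℂ)) i = if i = i' then 1 else 0 :=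
      EuclideanSpace.single_apply i' 1 i
    rw [apply_smul_sum, h1] at hx
    have h3 : ∑ j, ⟪φ j, EuclideanSpace.single i' (1:ℂ)⟫ * φ j i = Smat φ i i' := by
      unfold Smat
      apply Finset.sum_congr rfl; intro j _
      rw [EuclideanSpace.inner_single_right]
      ring
    rw [h3] at hx
    rw [hcast]
    calc Smat φ i i' = ((d:ℂ)/n) * Smat φ i i' * ((n:ℂ)/d) := by field_simp
      _ = (if i = i' then (1:ℂ) else 0) * ((n:ℂ)/d) := by rw [← hx]
      _ = if i = i' then (n:ℂ)/d else 0 := by split <;> simp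
  · intro h x
    ext i
    rw [apply_smul_sum]
    have h3 : ∑ j, ⟪φ j, x⟫ * φ j i = ∑ i', Smat φ i i' * x i' := by
      simp only [inner_eq', Smat, Finset.sum_mul]
      rw [Finset.sum_comm]
      apply Finset.sum_congr rfl; intro j _
      apply Finset.sum_congr rfl; intro i' _
      ring
    rw [h3]
    simp only [h, hcast, ite_mul, zero_mul]
    rw [Finset.sum_ite_eq Finset.univ i (fun i' => ((n:ℂ)/(d:ℂ)) * x i')]
    simp only [Finset.mem_univ, if_true]
    field_simp


/-- The Welch bound `max_{j ≠ k} |⟨φ_j, φ_k⟩| = √((n−d)/(d(n−1)))` is attained with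
equality if and only if `(φ_1, …, φ_n)` is an equiangular tight frame for `ℂ^d`. -/
theorem welch_bound_equality_iff_etf {d n : ℕ} (hn : 2 ≤ n) (hdn : d ≤ n)
    (φ : Fin n → EuclideanSpace ℂ (Fin d)) (hφ : ∀ j, ‖φ j‖ = 1) :
    (Finset.univ.offDiag).sup' (offDiag_univ_nonempty hn)
        (fun p => ‖⟪φ p.1, φ p.2⟫‖) =
      Real.sqrt (((n : ℝ) - d) / (d * ((n : ℝ) - 1))) ↔
    IsETF d n φ := by
  -- d ≠ 0
  have hd : d ≠ 0 := by
    rintro rfl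
    have h0 := hφ ⟨0, by omega⟩
    have hz : φ ⟨0, by omega⟩ = 0 := Subsingleton.elim _ _
    rw [hz, norm_zero] at h0
    exact zero_ne_one h0
  have hn0 : n ≠ 0 := by omega
  have hd' : (d:ℝ) ≠ 0 := Nat.cast_ne_zero.mpr hd
  have hd1 : (1:ℝ) ≤ (d:ℝ) := by exact_mod_cast Nat.one_le_iff_ne_zero.mpr hd
  have hn2 : (2:ℝ) ≤ (n:ℝ) := by exact_mod_cast hn
  have hdn' : (d:ℝ) ≤ (n:ℝ) := by exact_mod_cast hdn
  set B : ℝ := Real.sqrt (((n : ℝ) - d) / (d * ((n : ℝ) - 1))) with hBdef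
  have hargnn : 0 ≤ ((n : ℝ) - d) / (d * ((n : ℝ) - 1)) := by
    apply div_nonneg (by linarith)
    have : (0:ℝ) < (n:ℝ) - 1 := by linarith
    positivity
  have hB2 : B ^ 2 = ((n : ℝ) - d) / (d * ((n : ℝ) - 1)) := Real.sq_sqrt hargnn
  have hBnn : 0 ≤ B := Real.sqrt_nonneg _
  -- the Fr quantity
  set Fr : ℝ := ∑ i, ∑ i', Complex.normSq
      (Smat φ i i' - (if i = i' then (((n:ℝ)/d : ℝ) : ℂ) else 0)) with hFrdef
  have hFrnn : 0 ≤ Fr := Finset.sum_nonneg fun i _ =>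
    Finset.sum_nonneg fun i' _ => Complex.normSq_nonneg _
  have hkey : ∑ j, ∑ k, ‖⟪φ j, φ k⟫‖ ^ 2 = Fr + (n:ℝ)^2 / d := by
    rw [hFrdef, Fr_eq φ hφ hd]; ring
  -- diagonal terms are 1
  have hdiag : ∀ j : Fin n, ‖⟪φ j, φ j⟫‖ = 1 := by
    intro j
    rw [inner_self_eq_norm_sq_to_K]
    rw [hφ j]
    norm_num
  -- split the double sum into diagonal and off-diagonal
  have hsplit : ∑ p ∈ (Finset.univ : Finset (Fin n)).offDiag, ‖⟪φ p.1, φ p.2⟫‖ ^ 2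
      = Fr + (n:ℝ)^2/d - n := by
    have h1 : ∑ j, ∑ k, ‖⟪φ j, φ k⟫‖ ^ 2
        = ∑ p ∈ (Finset.univ : Finset (Fin n)) ×ˢ Finset.univ, ‖⟪φ p.1, φ p.2⟫‖ ^ 2 :=
      (Finset.sum_product' ..).symm
    rw [← Finset.diag_union_offDiag (Finset.univ : Finset (Fin n)),
      Finset.sum_union (Finset.disjoint_diag_offDiag _), Finset.sum_diag] at h1
    have h2 : ∑ j : Fin n, ‖⟪φ j, φ j⟫‖ ^ 2 = (n:ℝ) := by
      have he : ∀ j : Fin n, ‖⟪φ j, φ j⟫‖ ^ 2 = 1 := fun j => by rw [hdiag j]; norm_num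
      rw [Finset.sum_congr rfl fun j _ => he j]
      simp
    rw [h2] at h1
    rw [hkey] at h1
    linarith
  -- cardinality of offDiag
  have hcard : (((Finset.univ : Finset (Fin n)).offDiag.card : ℝ)) = (n:ℝ) * ((n:ℝ) - 1) := by
    rw [Finset.offDiag_card]
    simp only [Finset.card_univ, Fintype.card_fin]
    have h1 : (1:ℕ) ≤ n := by omega
    rw [Nat.cast_sub (Nat.le_mul_of_pos_left n (by omega))]
    push_cast
    ring
  -- key algebra: n(n-1) * B^2 = n^2/d - n
  have hn1 : (n:ℝ) - 1 ≠ 0 := by linarith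
  have halg : ((n:ℝ) * ((n:ℝ)-1)) * B^2 = (n:ℝ)^2/d - n := by
    rw [hB2]
    field_simp
  constructor
  · -- sup' = B → ETF
    intro h
    have hle : ∀ p ∈ (Finset.univ : Finset (Fin n)).offDiag, ‖⟪φ p.1, φ p.2⟫‖ ≤ B := by
      intro p hp
      rw [← h]
      exact Finset.le_sup' (fun p : Fin n × Fin n => ‖⟪φ p.1, φ p.2⟫‖) hp
    have hle2 : ∀ p ∈ (Finset.univ : Finset (Fin n)).offDiag, ‖⟪φ p.1, φ p.2⟫‖^2 ≤ B^2 :=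
      fun p hp => pow_le_pow_left₀ (norm_nonneg _) (hle p hp) 2
    have hsum_le : ∑ p ∈ (Finset.univ : Finset (Fin n)).offDiag, ‖⟪φ p.1, φ p.2⟫‖ ^ 2
        ≤ ((n:ℝ) * ((n:ℝ)-1)) * B^2 := by
      calc ∑ p ∈ (Finset.univ : Finset (Fin n)).offDiag, ‖⟪φ p.1, φ p.2⟫‖ ^ 2
          ≤ (Finset.univ : Finset (Fin n)).offDiag.card • B^2 :=
            Finset.sum_le_card_nsmul _ _ _ hle2
        _ = ((n:ℝ) * ((n:ℝ)-1)) * B^2 := by rw [nsmul_eq_mul, hcard]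
    rw [halg] at hsum_le
    rw [hsplit] at hsum_le
    have hFr0 : Fr = 0 := by linarith
    -- tightness
    have hS : ∀ i i', Smat φ i i' = (if i = i' then (((n:ℝ)/d : ℝ) : ℂ) else 0) := by
      have hFr0' : (∑ i, ∑ i', Complex.normSq
          (Smat φ i i' - (if i = i' then (((n:ℝ)/d : ℝ) : ℂ) else 0))) = 0 := by
        rw [← hFrdef]; exact hFr0
      intro i i'
      have h1 := (Finset.sum_eq_zero_iff_of_nonneg (fun i _ =>
        Finset.sum_nonneg fun i' _ => Complex.normSq_nonneg _)).mp hFr0' i (Finset.mem_univ i)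
      have h2 := (Finset.sum_eq_zero_iff_of_nonneg
        (fun i' _ => Complex.normSq_nonneg _)).mp h1 i' (Finset.mem_univ i')
      exact sub_eq_zero.mp (Complex.normSq_eq_zero.mp h2)
    have htight := (tight_iff φ hd hn0).mpr hS
    -- equiangularity
    have hsum_eq : ∑ p ∈ (Finset.univ : Finset (Fin n)).offDiag, ‖⟪φ p.1, φ p.2⟫‖ ^ 2
        = ((n:ℝ) * ((n:ℝ)-1)) * B^2 := by rw [hsplit, hFr0, halg]; ring
    have hzero : ∑ p ∈ (Finset.univ : Finset (Fin n)).offDiag,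
        (B^2 - ‖⟪φ p.1, φ p.2⟫‖ ^ 2) = 0 := by
      rw [Finset.sum_sub_distrib, Finset.sum_const, nsmul_eq_mul, hcard, hsum_eq]
      ring
    have hall : ∀ p ∈ (Finset.univ : Finset (Fin n)).offDiag, ‖⟪φ p.1, φ p.2⟫‖ ^ 2 = B^2 := by
      intro p hp
      have := (Finset.sum_eq_zero_iff_of_nonneg
        (fun q hq => sub_nonneg.mpr (hle2 q hq))).mp hzero p hp
      linarith
    refine ⟨htight, hφ, B, hBnn, fun j k hjk => ?_⟩
    have hp : (j, k) ∈ (Finset.univ : Finset (Fin n)).offDiag := by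
      simp [Finset.mem_offDiag, hjk]
    have := hall (j, k) hp
    rw [← Real.sqrt_sq (norm_nonneg _), this, Real.sqrt_sq hBnn]
  · -- ETF → sup' = B
    rintro ⟨htight, hunit, α, hα0, hαeq⟩
    have hS := (tight_iff φ hd hn0).mp htight
    have hFr0 : Fr = 0 := by
      rw [hFrdef]
      apply Finset.sum_eq_zero; intro i _
      apply Finset.sum_eq_zero; intro i' _
      rw [hS i i', sub_self]
      exact Complex.normSq_zero
    have hoff : ∀ p ∈ (Finset.univ : Finset (Fin n)).offDiag, ‖⟪φ p.1, φ p.2⟫‖ = α := by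
      intro p hp
      rw [Finset.mem_offDiag] at hp
      exact hαeq p.1 p.2 hp.2.2
    have hsum_eq : ∑ p ∈ (Finset.univ : Finset (Fin n)).offDiag, ‖⟪φ p.1, φ p.2⟫‖ ^ 2
        = ((n:ℝ) * ((n:ℝ)-1)) * α^2 := by
      rw [Finset.sum_congr rfl fun p hp => by rw [hoff p hp]]
      rw [Finset.sum_const, nsmul_eq_mul, hcard]
    have hne : (n:ℝ) * ((n:ℝ)-1) ≠ 0 := by
      have h5 : (0:ℝ) < (n:ℝ) - 1 := by linarith
      positivity
    have hα2 : α^2 = B^2 := by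
      have h4 : ((n:ℝ) * ((n:ℝ)-1)) * α^2 = ((n:ℝ) * ((n:ℝ)-1)) * B^2 := by
        rw [halg, ← hsum_eq, hsplit, hFr0]; ring
      exact mul_left_cancel₀ hne h4
    have hαB : α = B := by
      rw [← Real.sqrt_sq hα0, hα2, Real.sqrt_sq hBnn]
    apply le_antisymm
    · apply Finset.sup'_le
      intro p hp
      rw [hoff p hp, hαB]
    · have hp : ((⟨0, by omega⟩ : Fin n), (⟨1, by omega⟩ : Fin n))
          ∈ (Finset.univ : Finset (Fin n)).offDiag := by
        simp [Finset.mem_offDiag, Fin.ext_iff]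
      calc B = α := hαB.symm
        _ = ‖⟪φ ⟨0, by omega⟩, φ ⟨1, by omega⟩⟫‖ := (hoff _ hp).symm
        _ ≤ _ := Finset.le_sup' (fun p : Fin n × Fin n => ‖⟪φ p.1, φ p.2⟫‖) hp
end
end

section
/- Let m = (m_0,…,m_s) be a vector of odd integers each ≥ 3 and let |m| = ∏_{ℓ=0}^s m_ℓ. Then the Gabor–Steiner system G(m) = { π(k,κ)ψ : (k,κ) ∈ (⊕_{ℓ} ℤ_{m_ℓ}) × (⊕_{ℓ} ℤ_{m_ℓ}) }, consisting of |m|² vectors in ℂ^{|m|(|m|−1)/2}, satisfies: every vector has squared norm |m| − 1, the absolute value of the inner product of any two distinct vectors equals 1, and ∑_{(k,κ)} π(k,κ)ψ (π(k,κ)ψ)^* = 2|m| · I; i.e., G(m) is (after normalization) an equiangular tight frame. -/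
set_option linter.unusedSectionVars false
set_option linter.unusedVariables false
set_option linter.unnecessarySimpa false
set_option maxHeartbeats 1000000


open scoped ComplexInnerProductSpace

noncomputable section

/-- The index group `⊕_{ℓ=0}^s ℤ_{m_ℓ}`. -/
abbrev GSGroup {s : ℕ} (m : Fin (s + 1) → ℕ) : Type := ∀ ℓ : Fin (s + 1), ZMod (m ℓ)

/-- The rank of `i` in the lexicographic order on `⊕_{ℓ=0}^s ℤ_{m_ℓ}`
(coordinate `0` most significant). -/
def lexRank {s : ℕ} (m : Fin (s + 1) → ℕ) (i : GSGroup m) : ℕ :=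
  ∑ ℓ, (i ℓ).val * ∏ ℓ' ∈ Finset.univ.filter (fun ℓ' => ℓ < ℓ'), m ℓ'

/-- The set `𝓘` of the first `(|m|−1)/2` elements of `⊕_ℓ ℤ_{m_ℓ}` in lexicographic
order. -/
def GSIndex {s : ℕ} (m : Fin (s + 1) → ℕ) : Type :=
  {i : GSGroup m // lexRank m i < ((∏ ℓ, m ℓ) - 1) / 2}

instance {s : ℕ} (m : Fin (s + 1) → ℕ) [∀ ℓ, NeZero (m ℓ)] : Fintype (GSIndex m) :=
  Subtype.fintype _

/-- The Gabor–Steiner vector `π(k,κ)ψ ∈ ℂ^{|m|(|m|−1)/2}`: the block vector whose `i`-th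
block (for `i ∈ 𝓘`) is `M^{(κ)} T^{(k)} φ_i`, where `(φ_i)_j = 1` for `j = i`, `−1` for
`j = m − i − 𝟙`, and `0` otherwise; translation acts by `(T^{(k)} v)(j) = v(j−k)` and
modulation by multiplication with `∏_ℓ ζ_{m_ℓ}^{κ_ℓ j_ℓ}` with `ζ_q = exp(2πi/q)`. -/
def gsVec {s : ℕ} (m : Fin (s + 1) → ℕ) [∀ ℓ, NeZero (m ℓ)] (k κ : GSGroup m) :
    EuclideanSpace ℂ (GSIndex m × GSGroup m) :=
  WithLp.toLp 2 fun (p : GSIndex m × GSGroup m) =>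
    (∏ ℓ, Complex.exp (2 * Real.pi * Complex.I *
        ((((κ ℓ).val * (p.2 ℓ).val : ℕ) : ℂ) / ((m ℓ : ℕ) : ℂ)))) *
      (if p.2 - k = p.1.1 then 1
       else if p.2 - k = -p.1.1 - 1 then -1 else 0)

namespace GS

open Finset Complex

/-! ### roots of unity -/

def ec (q : ℕ) (a : ZMod q) : ℂ := Complex.exp (2 * Real.pi * Complex.I / q) ^ a.val

variable {q : ℕ} [NeZero q]

lemma zeta_pow_q : Complex.exp (2 * Real.pi * Complex.I / q) ^ q = 1 :=
  (Complex.isPrimitiveRoot_exp q (NeZero.ne q)).pow_eq_one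

lemma zeta_pow_mod (n : ℕ) :
    Complex.exp (2 * Real.pi * Complex.I / q) ^ n
      = Complex.exp (2 * Real.pi * Complex.I / q) ^ (n % q) := by
  conv_lhs => rw [← Nat.div_add_mod n q]
  rw [pow_add, pow_mul, zeta_pow_q, one_pow, one_mul]

lemma ec_natCast (n : ℕ) :
    ec q (n : ZMod q) = Complex.exp (2 * Real.pi * Complex.I / q) ^ n := by
  rw [ec, ZMod.val_natCast, ← zeta_pow_mod]

lemma ec_zero : ec q 0 = 1 := by
  rw [ec]; simp

lemma ec_add (a b : ZMod q) : ec q (a + b) = ec q a * ec q b := by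
  have h : ((a.val + b.val : ℕ) : ZMod q) = a + b := by
    push_cast
    rw [ZMod.natCast_rightInverse a, ZMod.natCast_rightInverse b]
  rw [← h, ec_natCast, pow_add, ec, ec]

lemma norm_ec (a : ZMod q) : ‖ec q a‖ = 1 := by
  rw [ec, norm_pow]
  have h : 2 * Real.pi * Complex.I / q = ((2 * Real.pi / q : ℝ) : ℂ) * Complex.I := by
    push_cast; ring
  rw [h, Complex.norm_exp_ofReal_mul_I, one_pow]

lemma ec_ne_zero (a : ZMod q) : ec q a ≠ 0 := by
  intro h; have := norm_ec (q := q) a; rw [h] at this; simp at this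

lemma conj_ec (a : ZMod q) : (starRingEnd ℂ) (ec q a) = ec q (-a) := by
  have h1 : (starRingEnd ℂ) (ec q a) * ec q a = 1 := by
    rw [mul_comm, Complex.mul_conj]
    norm_cast
    rw [Complex.normSq_eq_norm_sq, norm_ec]; norm_num
  have h2 : ec q (-a) * ec q a = 1 := by
    rw [← ec_add]; simp [ec_zero]
  exact mul_right_cancel₀ (ec_ne_zero a) (h1.trans h2.symm)

lemma sum_ec (a : ZMod q) :
    ∑ c : ZMod q, ec q (c * a) = if a = 0 then (q : ℂ) else 0 := by
  split_ifs with h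
  · subst h; simp [ec_zero, ZMod.card]
  · set ζ := Complex.exp (2 * Real.pi * Complex.I / q) with hζ
    have hx : ζ ^ a.val ≠ 1 := by
      intro h1
      have hd := (Complex.isPrimitiveRoot_exp q (NeZero.ne q)).pow_eq_one_iff_dvd a.val
      rw [← hζ] at hd
      have := hd.mp h1
      have hv : a.val = 0 := Nat.eq_zero_of_dvd_of_lt this (ZMod.val_lt a)
      exact h (ZMod.val_eq_zero a |>.mp hv)
    have step : ∀ c : ZMod q, ec q (c * a) = (ζ ^ a.val) ^ c.val := by
      intro c
      rw [ec, ZMod.val_mul, ← zeta_pow_mod, ← pow_mul, mul_comm a.val c.val, hζ]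
    rw [Finset.sum_congr rfl fun c _ => step c]
    have reindex : ∑ c : ZMod q, (ζ ^ a.val) ^ c.val
        = ∑ n ∈ Finset.range q, (ζ ^ a.val) ^ n := by
      refine Finset.sum_bij' (fun c _ => c.val) (fun n _ => (n : ZMod q)) ?_ ?_ ?_ ?_ ?_
      · intro c _; exact Finset.mem_range.mpr (ZMod.val_lt c)
      · intro n _; exact Finset.mem_univ _
      · intro c _; exact ZMod.natCast_rightInverse c
      · intro n hn; exact ZMod.val_cast_of_lt (Finset.mem_range.mp hn)
      · intro c _; rfl
    rw [reindex, geom_sum_eq hx]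
    have : (ζ ^ a.val) ^ q = 1 := by
      rw [← pow_mul, mul_comm, pow_mul, zeta_pow_q, one_pow]
    rw [this]; simp

/-! ### rank lemmas -/

variable {s : ℕ} (m : Fin (s + 1) → ℕ) [∀ ℓ, NeZero (m ℓ)]

def zmodFinEquiv (q : ℕ) [NeZero q] : ZMod q ≃ Fin q where
  toFun a := ⟨a.val, ZMod.val_lt a⟩
  invFun n := (n : ZMod q)
  left_inv a := ZMod.natCast_rightInverse a
  right_inv n := by ext; simp [ZMod.val_natCast, Nat.mod_eq_of_lt n.isLt]

def gsEquiv : GSGroup m ≃ Fin (∏ ℓ, m ℓ) :=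
  (Equiv.piCongrRight fun ℓ => zmodFinEquiv (m ℓ)).trans
    ((Equiv.piCongrLeft' (fun ℓ => Fin (m ℓ)) Fin.revPerm).trans
      (finPiFinEquiv.trans
        (finCongr (Fintype.prod_equiv Fin.revPerm.symm _ m fun ℓ => rfl))))

lemma prod_filter_gt (ℓ : Fin (s + 1)) :
    ∏ ℓ' ∈ Finset.univ.filter (fun ℓ' => Fin.rev ℓ < ℓ'), m ℓ'
      = ∏ j : Fin ℓ.1, m ((Fin.castLE ℓ.isLt.le j).rev) := by
  have key : ∀ ℓ' : Fin (s + 1), Fin.rev ℓ < ℓ' → (Fin.rev ℓ').val < ℓ.1 := by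
    intro ℓ' h1
    have h2 : Fin.rev ℓ' < Fin.rev (Fin.rev ℓ) := Fin.rev_lt_rev.mpr h1
    rw [Fin.rev_rev] at h2
    exact h2
  have cast_eq : ∀ (ℓ' : Fin (s + 1)) (h : (Fin.rev ℓ').val < ℓ.1),
      Fin.castLE ℓ.isLt.le ⟨(Fin.rev ℓ').val, h⟩ = Fin.rev ℓ' := by
    intro ℓ' h; ext; simp
  have himg : Finset.univ.filter (fun ℓ' => Fin.rev ℓ < ℓ')
      = Finset.image (fun j : Fin ℓ.1 => (Fin.castLE ℓ.isLt.le j).rev) Finset.univ := by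
    ext ℓ'
    simp only [Finset.mem_filter, Finset.mem_univ, true_and, Finset.mem_image]
    constructor
    · intro h1
      refine ⟨⟨(Fin.rev ℓ').val, key ℓ' h1⟩, ?_⟩
      rw [cast_eq, Fin.rev_rev]
    · rintro ⟨j, hj⟩
      rw [← hj]
      refine Fin.rev_lt_rev.mpr (Fin.lt_def.mpr ?_)
      simpa using j.isLt
  rw [himg, Finset.prod_image]
  intro a _ b _ hab
  exact Fin.castLE_injective _ (Fin.rev_injective hab)

lemma gsEquiv_val (i : GSGroup m) : ((gsEquiv m i : Fin (∏ ℓ, m ℓ)) : ℕ) = lexRank m i := by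
  have h1 : ((gsEquiv m i : Fin (∏ ℓ, m ℓ)) : ℕ)
      = ∑ ℓ : Fin (s + 1), (i (Fin.rev ℓ)).val
          * ∏ j : Fin ℓ.1, m ((Fin.castLE ℓ.isLt.le j).rev) := by
    rw [gsEquiv]
    simp only [Equiv.trans_apply, finCongr_apply, Fin.coe_cast, finPiFinEquiv_apply,
      Equiv.piCongrLeft'_apply, Equiv.piCongrRight_apply, Fin.revPerm_symm]
    rfl
  rw [h1, lexRank, ← Equiv.sum_comp Fin.revPerm
    (fun ℓ => (i ℓ).val * ∏ ℓ' ∈ Finset.univ.filter (fun ℓ' => ℓ < ℓ'), m ℓ')]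
  refine Finset.sum_congr rfl fun ℓ _ => ?_
  rw [show Fin.revPerm ℓ = Fin.rev ℓ from rfl, prod_filter_gt]

lemma lexRank_lt (i : GSGroup m) : lexRank m i < ∏ ℓ, m ℓ := by
  rw [← gsEquiv_val]; exact (gsEquiv m i).isLt

lemma lexRank_inj {i i' : GSGroup m} (h : lexRank m i = lexRank m i') : i = i' := by
  apply (gsEquiv m).injective
  rw [← gsEquiv_val, ← gsEquiv_val] at h
  exact Fin.ext h

lemma lexRank_surj {r : ℕ} (hr : r < ∏ ℓ, m ℓ) : ∃ i, lexRank m i = r :=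
  ⟨(gsEquiv m).symm ⟨r, hr⟩, by rw [← gsEquiv_val, Equiv.apply_symm_apply]⟩

lemma neg_sub_one_apply (i : GSGroup m) (ℓ : Fin (s + 1)) : (-i - 1) ℓ = -(i ℓ) - 1 := rfl

lemma val_neg_sub_one {q : ℕ} [NeZero q] (a : ZMod q) : (-a - 1).val = q - 1 - a.val := by
  have hq : 1 ≤ q := Nat.one_le_iff_ne_zero.mpr (NeZero.ne q)
  have hv : a.val < q := ZMod.val_lt a
  have h : ((q - 1 - a.val : ℕ) : ZMod q) = -a - 1 := by
    rw [Nat.cast_sub (by omega : a.val ≤ q - 1), Nat.cast_sub (by omega : 1 ≤ q)]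
    rw [ZMod.natCast_self, ZMod.natCast_rightInverse a]
    ring
  rw [← h, ZMod.val_cast_of_lt (by omega)]

lemma lexRank_add_neg (i : GSGroup m) :
    lexRank m i + lexRank m (-i - 1) = (∏ ℓ, m ℓ) - 1 := by
  have key : ∀ i : GSGroup m, lexRank m i + lexRank m (-i - 1)
      = ∑ ℓ, (m ℓ - 1) * ∏ ℓ' ∈ Finset.univ.filter (fun ℓ' => ℓ < ℓ'), m ℓ' := by
    intro i
    rw [lexRank, lexRank, ← Finset.sum_add_distrib]
    refine Finset.sum_congr rfl fun ℓ _ => ?_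
    rw [neg_sub_one_apply, val_neg_sub_one, ← add_mul]
    congr 1
    have := ZMod.val_lt (i ℓ)
    have := Nat.one_le_iff_ne_zero.mpr (NeZero.ne (m ℓ))
    omega
  set C := ∑ ℓ, (m ℓ - 1) * ∏ ℓ' ∈ Finset.univ.filter (fun ℓ' => ℓ < ℓ'), m ℓ' with hC
  have hN : 0 < ∏ ℓ, m ℓ := Finset.prod_pos fun ℓ _ => (NeZero.pos (m ℓ))
  have h1 : C < ∏ ℓ, m ℓ := by
    have h0 := key 0
    have : lexRank m (0 : GSGroup m) = 0 := by
      rw [lexRank]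
      refine Finset.sum_eq_zero fun ℓ _ => ?_
      simp [Pi.zero_apply, ZMod.val_zero]
    rw [this, zero_add] at h0
    rw [← h0]; exact lexRank_lt m _
  have h2 : (∏ ℓ, m ℓ) - 1 ≤ C := by
    obtain ⟨i', hi'⟩ := lexRank_surj m (r := (∏ ℓ, m ℓ) - 1) (by omega)
    have := key i'
    omega
  have := key i
  omega

/-! ### characters -/

def chi (κ j : GSGroup m) : ℂ := ∏ ℓ, ec (m ℓ) (κ ℓ * j ℓ)

lemma chi_add_left (κ κ' j : GSGroup m) :
    chi m (κ + κ') j = chi m κ j * chi m κ' j := by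
  rw [chi, chi, chi, ← Finset.prod_mul_distrib]
  refine Finset.prod_congr rfl fun ℓ _ => ?_
  rw [show (κ + κ') ℓ * j ℓ = κ ℓ * j ℓ + κ' ℓ * j ℓ from by
    rw [Pi.add_apply, add_mul], ec_add]

lemma chi_add_right (κ j j' : GSGroup m) :
    chi m κ (j + j') = chi m κ j * chi m κ j' := by
  rw [chi, chi, chi, ← Finset.prod_mul_distrib]
  refine Finset.prod_congr rfl fun ℓ _ => ?_
  rw [show κ ℓ * (j + j') ℓ = κ ℓ * j ℓ + κ ℓ * j' ℓ from by
    rw [Pi.add_apply, mul_add], ec_add]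

lemma conj_chi_left (κ j : GSGroup m) :
    (starRingEnd ℂ) (chi m κ j) = chi m (-κ) j := by
  rw [chi, map_prod, chi]
  refine Finset.prod_congr rfl fun ℓ _ => ?_
  rw [conj_ec, show (-κ) ℓ * j ℓ = -(κ ℓ * j ℓ) from by rw [Pi.neg_apply, neg_mul]]

lemma conj_chi_right (κ j : GSGroup m) :
    (starRingEnd ℂ) (chi m κ j) = chi m κ (-j) := by
  rw [chi, map_prod, chi]
  refine Finset.prod_congr rfl fun ℓ _ => ?_
  rw [conj_ec, show κ ℓ * (-j) ℓ = -(κ ℓ * j ℓ) from by rw [Pi.neg_apply, mul_neg]]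

lemma norm_chi (κ j : GSGroup m) : ‖chi m κ j‖ = 1 := by
  rw [chi, norm_prod]
  exact Finset.prod_eq_one fun ℓ _ => norm_ec _

lemma sum_chi (j : GSGroup m) :
    ∑ κ : GSGroup m, chi m κ j = if j = 0 then ((∏ ℓ, m ℓ : ℕ) : ℂ) else 0 := by
  have hps := Finset.prod_univ_sum (fun ℓ => (Finset.univ : Finset (ZMod (m ℓ))))
    (fun ℓ c => ec (m ℓ) (c * j ℓ))
  rw [Fintype.piFinset_univ] at hps
  have : ∑ κ : GSGroup m, chi m κ j = ∏ ℓ, ∑ c : ZMod (m ℓ), ec (m ℓ) (c * j ℓ) := by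
    rw [hps]; rfl
  rw [this]
  by_cases hj : j = 0
  · subst hj
    rw [if_pos rfl]
    have : ∀ ℓ : Fin (s+1), (∑ c : ZMod (m ℓ), ec (m ℓ) (c * (0 : GSGroup m) ℓ)) = ((m ℓ : ℕ) : ℂ) := by
      intro ℓ
      rw [show ((0 : GSGroup m) ℓ) = (0 : ZMod (m ℓ)) from rfl]
      rw [sum_ec, if_pos rfl]
    rw [Finset.prod_congr rfl fun ℓ _ => this ℓ, ← Nat.cast_prod]
  · rw [if_neg hj]
    have : ∃ ℓ, j ℓ ≠ 0 := by
      by_contra hc; push_neg at hc; exact hj (funext hc)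
    obtain ⟨ℓ₀, hℓ₀⟩ := this
    refine Finset.prod_eq_zero (Finset.mem_univ ℓ₀) ?_
    rw [sum_ec, if_neg hℓ₀]


lemma chi_comm (κ j : GSGroup m) : chi m κ j = chi m j κ :=
  Finset.prod_congr rfl fun ℓ _ => by rw [mul_comm]

lemma sum_chi_right (κ : GSGroup m) :
    ∑ t : GSGroup m, chi m κ t = if κ = 0 then ((∏ ℓ, m ℓ : ℕ) : ℂ) else 0 := by
  rw [Finset.sum_congr rfl fun t _ => chi_comm m κ t, sum_chi]

/-! ### the phi vectors -/

def phi {s : ℕ} {m : Fin (s + 1) → ℕ} (a t : GSGroup m) : ℂ :=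
  (if t = a then 1 else 0) - (if t = -a - 1 then 1 else 0)

lemma conj_phi (a t : GSGroup m) : (starRingEnd ℂ) (phi a t) = phi a t := by
  simp only [phi]
  rw [map_sub, apply_ite (starRingEnd ℂ), apply_ite (starRingEnd ℂ), map_one, map_zero]

lemma ne_neg_self (i : GSIndex m) : (i.1 : GSGroup m) ≠ -i.1 - 1 := by
  intro h
  have h4 := lexRank_add_neg m i.1
  rw [← h] at h4
  have h2 := i.2
  omega

lemma phi_self {a : GSGroup m} (ha : a ≠ -a - 1) : phi a a = 1 := by
  simp [phi, ha]

lemma phi_negself {a : GSGroup m} (ha : a ≠ -a - 1) : phi a (-a - 1) = -1 := by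
  simp [phi, Ne.symm ha]

lemma gsVec_apply (k κ : GSGroup m) (p : GSIndex m × GSGroup m) :
    gsVec m k κ p = chi m κ p.2 * phi p.1.1 (p.2 - k) := by
  rw [gsVec, PiLp.toLp_apply]
  congr 1
  · rw [chi]
    refine Finset.prod_congr rfl fun ℓ _ => ?_
    rw [show 2 * (Real.pi : ℂ) * Complex.I *
          ((((κ ℓ).val * (p.2 ℓ).val : ℕ) : ℂ) / ((m ℓ : ℕ) : ℂ))
        = (((κ ℓ).val * (p.2 ℓ).val : ℕ) : ℂ) * (2 * (Real.pi : ℂ) * Complex.I / (m ℓ : ℕ)) from by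
      ring]
    rw [Complex.exp_nat_mul, ← ec_natCast]
    congr 1
    push_cast
    rw [ZMod.natCast_rightInverse (κ ℓ), ZMod.natCast_rightInverse (p.2 ℓ)]
  · have hne := ne_neg_self m p.1
    simp only [phi]
    by_cases h1 : p.2 - k = p.1.1
    · rw [if_pos h1, if_pos h1, if_neg (by rw [h1]; exact hne)]; ring
    · rw [if_neg h1, if_neg h1]
      by_cases h2 : p.2 - k = -p.1.1 - 1
      · rw [if_pos h2, if_pos h2]; ring
      · rw [if_neg h2, if_neg h2]; ring

lemma sum_mul_phi (F : GSGroup m → ℂ) (a kk : GSGroup m) :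
    ∑ j : GSGroup m, F j * phi a (j - kk) = F (a + kk) - F (-a - 1 + kk) := by
  have key : ∀ j : GSGroup m, F j * phi a (j - kk)
      = (if j = a + kk then F j else 0) - (if j = -a - 1 + kk then F j else 0) := by
    intro j
    simp only [phi]
    have e1 : (if j - kk = a then (1:ℂ) else 0) = (if j = a + kk then 1 else 0) := by
      by_cases h : j = a + kk
      · rw [if_pos h, if_pos (show j - kk = a from by rw [h]; ring)]
      · rw [if_neg h, if_neg (fun hx => h (by linear_combination hx))]
    have e2 : (if j - kk = -a - 1 then (1:ℂ) else 0)
        = (if j = -a - 1 + kk then 1 else 0) := by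
      by_cases h : j = -a - 1 + kk
      · rw [if_pos h, if_pos (show j - kk = -a - 1 from by rw [h]; ring)]
      · rw [if_neg h, if_neg (fun hx => h (by linear_combination hx))]
    rw [e1, e2]
    split_ifs <;> ring
  rw [Finset.sum_congr rfl fun j _ => key j, Finset.sum_sub_distrib,
    Finset.sum_ite_eq' Finset.univ (a + kk) F, Finset.sum_ite_eq' Finset.univ (-a - 1 + kk) F,
    if_pos (Finset.mem_univ _), if_pos (Finset.mem_univ _)]

/-! ### special elements -/

def half : GSGroup m := fun ℓ => (((m ℓ - 1) / 2 : ℕ) : ZMod (m ℓ))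

def inv2 : GSGroup m := fun ℓ => (((m ℓ + 1) / 2 : ℕ) : ZMod (m ℓ))

lemma neg_half (hodd : ∀ ℓ, Odd (m ℓ)) : -(half m) - 1 = half m := by
  funext ℓ
  have key : ((2 * ((m ℓ - 1) / 2) + 1 : ℕ) : ZMod (m ℓ)) = 0 := by
    have h3 : 2 * ((m ℓ - 1) / 2) + 1 = m ℓ := by
      obtain ⟨t, ht⟩ := hodd ℓ
      omega
    rw [h3, ZMod.natCast_self]
  push_cast at key
  show -(((m ℓ - 1) / 2 : ℕ) : ZMod (m ℓ)) - 1 = (((m ℓ - 1) / 2 : ℕ) : ZMod (m ℓ))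
  linear_combination -key

lemma two_mul_inv2 (hodd : ∀ ℓ, Odd (m ℓ)) : (2 : GSGroup m) * inv2 m = 1 := by
  funext ℓ
  have key : ((2 * ((m ℓ + 1) / 2) : ℕ) : ZMod (m ℓ)) = 1 := by
    have h3 : 2 * ((m ℓ + 1) / 2) = m ℓ + 1 := by
      obtain ⟨t, ht⟩ := hodd ℓ
      omega
    rw [h3]; push_cast [ZMod.natCast_self]; ring
  push_cast at key
  show (2 : ZMod (m ℓ)) * (((m ℓ + 1) / 2 : ℕ) : ZMod (m ℓ)) = 1
  linear_combination key

/-! ### the partition -/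

lemma sum_gsindex (f : GSGroup m → ℂ) :
    ∑ i : GSIndex m, f i.1
      = ∑ t ∈ Finset.univ.filter (fun t => lexRank m t < ((∏ ℓ, m ℓ) - 1) / 2), f t :=
  (Finset.sum_subtype _ (fun x => by simp) f).symm

lemma sum_gsindex_ite (f : GSGroup m → ℂ) (c : GSGroup m) :
    ∑ i : GSIndex m, (if i.1 = c then f i.1 else 0)
      = if lexRank m c < ((∏ ℓ, m ℓ) - 1) / 2 then f c else 0 := by
  rw [sum_gsindex m (fun t => if t = c then f t else 0), Finset.sum_ite_eq']
  simp

lemma rank_half (hN2 : (∏ ℓ, m ℓ) % 2 = 1) (hodd : ∀ ℓ, Odd (m ℓ)) :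
    lexRank m (half m) = ((∏ ℓ, m ℓ) - 1) / 2 := by
  have h4 := lexRank_add_neg m (half m)
  rw [neg_half m hodd] at h4
  omega

lemma sum_partition (hN2 : (∏ ℓ, m ℓ) % 2 = 1) (hodd : ∀ ℓ, Odd (m ℓ)) (g : GSGroup m → ℂ) :
    ∑ t : GSGroup m, g t
      = (∑ i : GSIndex m, (g i.1 + g (-i.1 - 1))) + g (half m) := by
  classical
  have hN1 : 0 < ∏ ℓ, m ℓ := Finset.prod_pos fun ℓ _ => NeZero.pos (m ℓ)
  set N := ∏ ℓ, m ℓ with hN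
  set h := (N - 1) / 2 with hh
  set A := Finset.univ.filter (fun t : GSGroup m => lexRank m t < h) with hA
  set B := Finset.univ.filter (fun t : GSGroup m => h < lexRank m t) with hB
  have hsplit := Finset.sum_filter_add_sum_filter_not Finset.univ
    (fun t : GSGroup m => lexRank m t < h) g
  have hrhalf : lexRank m (half m) = h := rank_half m hN2 hodd
  have hins : Finset.univ.filter (fun t : GSGroup m => ¬ lexRank m t < h)
      = insert (half m) B := by
    ext t
    simp only [Finset.mem_filter, Finset.mem_univ, true_and, Finset.mem_insert, hB]
    constructor
    · intro ht
      rcases Nat.lt_or_ge h (lexRank m t) with h1 | h1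
      · exact Or.inr h1
      · exact Or.inl (lexRank_inj m (by omega : lexRank m t = lexRank m (half m)))
    · rintro (rfl | hlt) <;> omega
  have hnotmem : half m ∉ B := by
    simp [hB, hrhalf]
  have hAB : ∑ t ∈ B, g t = ∑ i : GSIndex m, g (-i.1 - 1) := by
    rw [sum_gsindex m (fun t => g (-t - 1))]
    refine (Finset.sum_bij' (fun t _ => -t - 1) (fun t _ => -t - 1) ?_ ?_ ?_ ?_ ?_).symm
    · intro t ht
      simp only [hA, Finset.mem_filter, Finset.mem_univ, true_and] at ht
      simp only [hB, Finset.mem_filter, Finset.mem_univ, true_and]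
      have := lexRank_add_neg m t
      omega
    · intro t ht
      simp only [hB, Finset.mem_filter, Finset.mem_univ, true_and] at ht
      simp only [hA, Finset.mem_filter, Finset.mem_univ, true_and]
      have h1 := lexRank_add_neg m t
      have h2 := lexRank_lt m t
      omega
    · intro t _; ring
    · intro t _; ring
    · intro t _; rfl
  calc ∑ t : GSGroup m, g t
      = ∑ t ∈ A, g t + ∑ t ∈ Finset.univ.filter (fun t : GSGroup m => ¬ lexRank m t < h), g t := by
        rw [hsplit]
    _ = ∑ t ∈ A, g t + (g (half m) + ∑ t ∈ B, g t) := by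
        rw [hins, Finset.sum_insert hnotmem]
    _ = (∑ i : GSIndex m, (g i.1 + g (-i.1 - 1))) + g (half m) := by
        rw [Finset.sum_add_distrib, sum_gsindex m (fun t => g t), hAB]
        ring

lemma card_gsindex : Fintype.card (GSIndex m) = ((∏ ℓ, m ℓ) - 1) / 2 := by
  classical
  have hN1 : 0 < ∏ ℓ, m ℓ := Finset.prod_pos fun ℓ _ => NeZero.pos (m ℓ)
  have h1 : Fintype.card (GSIndex m)
      = (Finset.univ.filter (fun t : GSGroup m => lexRank m t < ((∏ ℓ, m ℓ) - 1) / 2)).card :=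
    Fintype.card_subtype _
  have hcard : (Finset.univ.filter
        (fun t : GSGroup m => lexRank m t < ((∏ ℓ, m ℓ) - 1) / 2)).card
      = (Finset.range (((∏ ℓ, m ℓ) - 1) / 2)).card := by
    refine Finset.card_nbij' (fun t => lexRank m t)
      (fun r => (gsEquiv m).symm ⟨r % (∏ ℓ, m ℓ), Nat.mod_lt _ hN1⟩) ?_ ?_ ?_ ?_
    · intro t ht
      simp only [Finset.mem_coe, Finset.mem_filter, Finset.mem_univ, true_and] at ht
      exact Finset.mem_range.mpr ht
    · intro r hr
      have hr' := Finset.mem_range.mp hr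
      have hrN : r % (∏ ℓ, m ℓ) = r := Nat.mod_eq_of_lt (by omega)
      simp only [Finset.mem_coe, Finset.mem_filter, Finset.mem_univ, true_and]
      show lexRank m ((gsEquiv m).symm ⟨r % (∏ ℓ, m ℓ), Nat.mod_lt _ hN1⟩)
        < ((∏ ℓ, m ℓ) - 1) / 2
      rw [← gsEquiv_val, Equiv.apply_symm_apply]
      simpa [hrN] using hr'
    · intro t ht
      simp only [Finset.mem_coe, Finset.mem_filter, Finset.mem_univ, true_and] at ht
      have hlt := lexRank_lt m t
      show (gsEquiv m).symm ⟨lexRank m t % (∏ ℓ, m ℓ), Nat.mod_lt _ hN1⟩ = t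
      have h2 : (⟨lexRank m t % (∏ ℓ, m ℓ), Nat.mod_lt _ hN1⟩ : Fin (∏ ℓ, m ℓ))
          = gsEquiv m t := by
        ext
        rw [gsEquiv_val]
        exact Nat.mod_eq_of_lt hlt
      rw [h2, Equiv.symm_apply_apply]
    · intro r hr
      have hr' := Finset.mem_range.mp hr
      have hrN : r % (∏ ℓ, m ℓ) = r := Nat.mod_eq_of_lt (by omega)
      show lexRank m ((gsEquiv m).symm ⟨r % (∏ ℓ, m ℓ), Nat.mod_lt _ hN1⟩) = r
      rw [← gsEquiv_val, Equiv.apply_symm_apply]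
      simp [hrN]
  rw [h1, hcard, Finset.card_range]

lemma sum_gsindex_ite_const (v : ℂ) (c : GSGroup m) :
    ∑ i : GSIndex m, (if i.1 = c then v else 0)
      = if lexRank m c < ((∏ ℓ, m ℓ) - 1) / 2 then v else 0 :=
  sum_gsindex_ite m (fun _ => v) c

instance : DecidableEq (GSIndex m) := fun a b => decidable_of_iff _ Subtype.ext_iff.symm

lemma sum_ind (c d : GSGroup m) :
    (∑ t : GSGroup m, (if t = c then (1:ℂ) else 0) * (if t = d then 1 else 0))
      = if d = c then 1 else 0 := by
  have key : ∀ t : GSGroup m, (if t = c then (1:ℂ) else 0) * (if t = d then 1 else 0)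
      = if t = d then (if t = c then (1:ℂ) else 0) else 0 := by
    intro t; split_ifs <;> ring
  rw [Finset.sum_congr rfl fun t _ => key t,
    Finset.sum_ite_eq' Finset.univ d (fun t => if t = c then (1:ℂ) else 0),
    if_pos (Finset.mem_univ _)]

lemma sum_phi_phi (i' i : GSIndex m) :
    ∑ t : GSGroup m, phi i'.1 t * phi i.1 t = if i' = i then 2 else 0 := by
  have hN1 : 0 < ∏ ℓ, m ℓ := Finset.prod_pos fun ℓ _ => NeZero.pos (m ℓ)
  have step1 : ∀ t : GSGroup m, phi i'.1 t * phi i.1 t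
      = (if t = i'.1 then (1:ℂ) else 0) * (if t = i.1 then 1 else 0)
        - (if t = i'.1 then (1:ℂ) else 0) * (if t = -i.1 - 1 then 1 else 0)
        - ((if t = -i'.1 - 1 then (1:ℂ) else 0) * (if t = i.1 then 1 else 0)
          - (if t = -i'.1 - 1 then (1:ℂ) else 0) * (if t = -i.1 - 1 then 1 else 0)) := by
    intro t; simp only [phi]; ring
  rw [Finset.sum_congr rfl fun t _ => step1 t, Finset.sum_sub_distrib,
    Finset.sum_sub_distrib, Finset.sum_sub_distrib, sum_ind, sum_ind, sum_ind, sum_ind]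
  have hc1 : (-i.1 - 1 : GSGroup m) ≠ i'.1 := by
    intro h
    have h4 := lexRank_add_neg m i.1
    rw [h] at h4
    have h2 := i.2
    have h2' := i'.2
    omega
  have hc2 : (i.1 : GSGroup m) ≠ -i'.1 - 1 := by
    intro h
    have h4 := lexRank_add_neg m i'.1
    rw [← h] at h4
    have h2 := i.2
    have h2' := i'.2
    omega
  by_cases hii : i' = i
  · subst hii
    rw [if_pos rfl, if_neg hc1, if_neg hc2, if_pos rfl]
    norm_num
  · have h1 : (i.1 : GSGroup m) ≠ i'.1 := fun h => hii (Subtype.ext h.symm)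
    have h4 : (-i.1 - 1 : GSGroup m) ≠ -i'.1 - 1 := fun h => h1 (by linear_combination -h)
    rw [if_neg h1, if_neg hc1, if_neg hc2, if_neg h4, if_neg hii]
    ring

lemma sum_apply_pilp {ι α : Type*} [Fintype ι] (sf : Finset α)
    (F : α → EuclideanSpace ℂ ι) (a : ι) :
    (∑ k ∈ sf, F k) a = ∑ k ∈ sf, F k a := by
  induction sf using Finset.cons_induction with
  | empty => rfl
  | cons k sf hk ih => rw [Finset.sum_cons, Finset.sum_cons, PiLp.add_apply, ih]

end GS

/-- The Gabor–Steiner system `G(m)` of `|m|²` vectors in `ℂ^{|m|(|m|−1)/2}` has all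
squared norms equal to `|m| − 1`, all distinct pairs with absolute inner product `1`,
and resolves the identity as `∑ π(k,κ)ψ (π(k,κ)ψ)^* = 2|m|·I`; i.e., it is (after
normalization) an equiangular tight frame. -/
theorem gabor_steiner_etf {s : ℕ} (m : Fin (s + 1) → ℕ) [∀ ℓ, NeZero (m ℓ)]
    (hm : ∀ ℓ, 3 ≤ m ℓ) (hodd : ∀ ℓ, Odd (m ℓ)) :
    (∀ k κ : GSGroup m, ‖gsVec m k κ‖ ^ 2 = ((∏ ℓ, m ℓ : ℕ) : ℝ) - 1) ∧
    (∀ k κ k' κ' : GSGroup m, (k, κ) ≠ (k', κ') →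
      ‖⟪gsVec m k κ, gsVec m k' κ'⟫‖ = 1) ∧
    (∀ x : EuclideanSpace ℂ (GSIndex m × GSGroup m),
      ∑ k : GSGroup m, ∑ κ : GSGroup m, ⟪gsVec m k κ, x⟫ • gsVec m k κ =
        ((2 * (∏ ℓ, m ℓ : ℕ) : ℕ) : ℂ) • x) := by
  classical
  have hN2 : (∏ ℓ, m ℓ) % 2 = 1 := Nat.odd_iff.mp
    (Finset.prod_induction m Odd (fun a b ha hb => ha.mul hb) odd_one (fun ℓ _ => hodd ℓ))
  have hN1 : 0 < ∏ ℓ, m ℓ := Finset.prod_pos fun ℓ _ => NeZero.pos (m ℓ)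
  have hinner : ∀ v w : EuclideanSpace ℂ (GSIndex m × GSGroup m),
      ⟪v, w⟫ = ∑ p : GSIndex m × GSGroup m, (starRingEnd ℂ) (v p) * w p := by
    intro v w
    rw [PiLp.inner_apply]
    exact Finset.sum_congr rfl fun p _ => by rw [RCLike.inner_apply, mul_comm]
  refine ⟨?_, ?_, ?_⟩
  · -- norms
    intro k κ
    rw [EuclideanSpace.norm_eq, Real.sq_sqrt (by positivity)]
    have step1 : ∀ p : GSIndex m × GSGroup m,
        ‖gsVec m k κ p‖ ^ 2 = ‖GS.phi p.1.1 (p.2 - k)‖ ^ 2 := by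
      intro p
      rw [GS.gsVec_apply, norm_mul, GS.norm_chi, one_mul]
    have step2 : ∀ i : GSIndex m,
        ∑ j : GSGroup m, ‖GS.phi i.1 (j - k)‖ ^ 2 = (2:ℝ) := by
      intro i
      have hne := GS.ne_neg_self m i
      rw [Fintype.sum_equiv (Equiv.subRight k) (fun j => ‖GS.phi i.1 (j - k)‖ ^ 2)
        (fun t => ‖GS.phi i.1 t‖ ^ 2) (fun j => rfl)]
      have hpt : ∀ t : GSGroup m, ‖GS.phi i.1 t‖ ^ 2
          = (if t = i.1 then (1:ℝ) else 0) + (if t = -i.1 - 1 then 1 else 0) := by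
        intro t
        simp only [GS.phi]
        by_cases h1 : t = i.1
        · rw [if_pos h1, if_neg (by rw [h1]; exact hne), if_pos h1,
            if_neg (by rw [h1]; exact hne)]
          norm_num
        · rw [if_neg h1, if_neg h1]
          by_cases h2 : t = -i.1 - 1
          · rw [if_pos h2, if_pos h2]; norm_num
          · rw [if_neg h2, if_neg h2]; norm_num
      rw [Finset.sum_congr rfl fun t _ => hpt t, Finset.sum_add_distrib,
        Finset.sum_ite_eq' Finset.univ i.1 (fun _ => (1:ℝ)),
        Finset.sum_ite_eq' Finset.univ (-i.1 - 1) (fun _ => (1:ℝ)),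
        if_pos (Finset.mem_univ _), if_pos (Finset.mem_univ _)]
      norm_num
    have main : ∑ p : GSIndex m × GSGroup m, ‖gsVec m k κ p‖ ^ 2
        = ∑ i : GSIndex m, ∑ j : GSGroup m, ‖GS.phi i.1 (j - k)‖ ^ 2 := by
      rw [Finset.sum_congr rfl fun p _ => step1 p]
      exact Fintype.sum_prod_type _
    rw [main, Finset.sum_congr rfl fun i _ => step2 i, Finset.sum_const,
      Finset.card_univ, GS.card_gsindex, nsmul_eq_mul]
    rw [show ((((∏ ℓ, m ℓ) - 1) / 2 : ℕ) : ℝ) * 2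
        = (((((∏ ℓ, m ℓ) - 1) / 2) * 2 : ℕ) : ℝ) from by push_cast; ring]
    rw [show (((∏ ℓ, m ℓ) - 1) / 2) * 2 = (∏ ℓ, m ℓ) - 1 from by omega]
    rw [Nat.cast_sub (by omega : 1 ≤ ∏ ℓ, m ℓ), Nat.cast_one]
  · -- inner products
    intro k κ k' κ' hne
    set δ := κ' - κ with hδ
    have expand : ∀ p : GSIndex m × GSGroup m,
        (starRingEnd ℂ) (gsVec m k κ p) * gsVec m k' κ' p
          = GS.chi m δ p.2 * (GS.phi p.1.1 (p.2 - k') * GS.phi p.1.1 (p.2 - k)) := by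
      intro p
      rw [GS.gsVec_apply, GS.gsVec_apply, map_mul, GS.conj_phi, GS.conj_chi_left,
        show GS.chi m (-κ) p.2 * GS.phi p.1.1 (p.2 - k)
            * (GS.chi m κ' p.2 * GS.phi p.1.1 (p.2 - k'))
          = (GS.chi m (-κ) p.2 * GS.chi m κ' p.2)
            * (GS.phi p.1.1 (p.2 - k') * GS.phi p.1.1 (p.2 - k)) from by ring,
        ← GS.chi_add_left, neg_add_eq_sub]
    have hval : ⟪gsVec m k κ, gsVec m k' κ'⟫
        = ∑ i : GSIndex m, ∑ j : GSGroup m,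
            GS.chi m δ j * (GS.phi i.1 (j - k') * GS.phi i.1 (j - k)) := by
      rw [hinner, Finset.sum_congr rfl fun p _ => expand p]
      exact Fintype.sum_prod_type _
    have inner_j : ∀ i : GSIndex m,
        ∑ j : GSGroup m, GS.chi m δ j * (GS.phi i.1 (j - k') * GS.phi i.1 (j - k))
          = GS.chi m δ (i.1 + k) * GS.phi i.1 (i.1 + k - k')
            - GS.chi m δ (-i.1 - 1 + k) * GS.phi i.1 (-i.1 - 1 + k - k') := by
      intro i
      have hh := GS.sum_mul_phi m (fun j => GS.chi m δ j * GS.phi i.1 (j - k')) i.1 k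
      rw [← hh]
      exact Finset.sum_congr rfl fun j _ => by ring
    rw [hval, Finset.sum_congr rfl fun i _ => inner_j i]
    by_cases hk : k = k'
    · subst hk
      have hκδ : δ ≠ 0 := by
        intro h0
        apply hne
        have : κ' = κ := by rwa [hδ, sub_eq_zero] at h0
        rw [this]
      have simp1 : ∀ i : GSIndex m,
          GS.chi m δ (i.1 + k) * GS.phi i.1 (i.1 + k - k)
            - GS.chi m δ (-i.1 - 1 + k) * GS.phi i.1 (-i.1 - 1 + k - k)
          = GS.chi m δ (i.1 + k) + GS.chi m δ (-i.1 - 1 + k) := by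
        intro i
        have ha := GS.ne_neg_self m i
        have e1 : (i.1 : GSGroup m) + k - k = i.1 := by ring
        have e2 : (-i.1 - 1 : GSGroup m) + k - k = -i.1 - 1 := by ring
        rw [e1, e2, GS.phi_self m ha, GS.phi_negself m ha]
        ring
      rw [Finset.sum_congr rfl fun i _ => simp1 i]
      have hpart := GS.sum_partition m hN2 hodd (fun t => GS.chi m δ (t + k))
      have hzero : ∑ t : GSGroup m, GS.chi m δ (t + k) = 0 := by
        rw [Fintype.sum_equiv (Equiv.addRight k) (fun t => GS.chi m δ (t + k))
          (fun u => GS.chi m δ u) (fun t => rfl), GS.sum_chi_right m δ, if_neg hκδ]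
      rw [hzero] at hpart
      have hS : ∑ i : GSIndex m, (GS.chi m δ (i.1 + k) + GS.chi m δ (-i.1 - 1 + k))
          = - GS.chi m δ (GS.half m + k) := eq_neg_of_add_eq_zero_left hpart.symm
      rw [hS, norm_neg, GS.norm_chi]
    · set u := GS.inv2 m * (k' - k - 1) with hu
      have hinv := GS.two_mul_inv2 m hodd
      have h2u : (2 : GSGroup m) * u = k' - k - 1 := by
        rw [hu, ← mul_assoc, hinv, one_mul]
      have cancel2 : ∀ a b : GSGroup m, 2 * a = 2 * b → a = b := by
        intro a b hab
        calc a = (2 * GS.inv2 m) * a := by rw [hinv, one_mul]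
          _ = GS.inv2 m * (2 * a) := by ring
          _ = GS.inv2 m * (2 * b) := by rw [hab]
          _ = (2 * GS.inv2 m) * b := by ring
          _ = b := by rw [hinv, one_mul]
      have c1 : ∀ i : GSIndex m, GS.phi i.1 (i.1 + k - k')
          = - (if i.1 = u then (1:ℂ) else 0) := by
        intro i
        simp only [GS.phi]
        by_cases hcc : (i.1 : GSGroup m) + k - k' = -i.1 - 1
        · have hiu : (i.1 : GSGroup m) = u := by
            refine cancel2 _ _ ?_
            rw [h2u]
            linear_combination hcc
          rw [if_neg (fun hx => hk (by linear_combination hx)), if_pos hcc, if_pos hiu]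
          ring
        · have hiu : (i.1 : GSGroup m) ≠ u := fun hx =>
            hcc (by linear_combination (2 : GSGroup m) * hx + h2u)
          rw [if_neg (fun hx => hk (by linear_combination hx)), if_neg hcc, if_neg hiu]
          ring
      have c2 : ∀ i : GSIndex m, GS.phi i.1 (-i.1 - 1 + k - k')
          = (if i.1 = -u - 1 then (1:ℂ) else 0) := by
        intro i
        simp only [GS.phi]
        by_cases hcc : (-i.1 - 1 : GSGroup m) + k - k' = i.1
        · have hiu : (i.1 : GSGroup m) = -u - 1 := by
            refine cancel2 _ _ ?_
            linear_combination -hcc + h2u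
          rw [if_pos hcc, if_pos hiu,
            if_neg (fun hx => hk (by linear_combination hx))]
          ring
        · have hiu : (i.1 : GSGroup m) ≠ -u - 1 := fun hx =>
            hcc (by linear_combination -((2 : GSGroup m) * hx) + h2u)
          rw [if_neg hcc, if_neg hiu,
            if_neg (fun hx => hk (by linear_combination hx))]
          ring
      have main : ∀ i : GSIndex m,
          GS.chi m δ (i.1 + k) * GS.phi i.1 (i.1 + k - k')
            - GS.chi m δ (-i.1 - 1 + k) * GS.phi i.1 (-i.1 - 1 + k - k')
          = (if i.1 = u then -GS.chi m δ (u + k) else 0)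
            + (if i.1 = -u - 1 then -GS.chi m δ (-(-u - 1) - 1 + k) else 0) := by
        intro i
        rw [c1 i, c2 i]
        have hune : u ≠ -u - 1 := by
          intro hx
          apply hk
          have h0 : (k' : GSGroup m) - k = 0 := by linear_combination hx - h2u
          linear_combination -h0
        by_cases h1 : (i.1 : GSGroup m) = u
        · have hni : (i.1 : GSGroup m) ≠ -u - 1 := by rw [h1]; exact hune
          rw [if_pos h1, if_pos h1, if_neg hni, if_neg hni, h1]
          ring
        · rw [if_neg h1, if_neg h1]
          by_cases h2 : (i.1 : GSGroup m) = -u - 1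
          · rw [if_pos h2, if_pos h2, h2]
            ring
          · rw [if_neg h2, if_neg h2]
            ring
      rw [Finset.sum_congr rfl fun i _ => main i, Finset.sum_add_distrib,
        GS.sum_gsindex_ite_const m (-GS.chi m δ (u + k)) u,
        GS.sum_gsindex_ite_const m (-GS.chi m δ (-(-u - 1) - 1 + k)) (-u - 1)]
      have hr1 := GS.lexRank_add_neg m u
      have hune2 : u ≠ -u - 1 := by
        intro hx
        apply hk
        have h0 : (k' : GSGroup m) - k = 0 := by linear_combination hx - h2u
        linear_combination -h0
      have hrne : lexRank m u ≠ lexRank m (-u - 1) := fun hx => hune2 (GS.lexRank_inj m hx)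
      have hr2 := GS.lexRank_lt m u
      have hr3 := GS.lexRank_lt m (-u - 1)
      rw [show (-(-u - 1) - 1 : GSGroup m) + k = u + k from by ring]
      by_cases hcase : lexRank m u < ((∏ ℓ, m ℓ) - 1) / 2
      · rw [if_pos hcase, if_neg (by omega), add_zero, norm_neg, GS.norm_chi]
      · rw [if_neg hcase, if_pos (by omega), zero_add, norm_neg, GS.norm_chi]
  · -- tightness
    intro x
    ext p
    obtain ⟨i, j⟩ := p
    have happ : ∀ k : GSGroup m,
        (∑ κ : GSGroup m, ⟪gsVec m k κ, x⟫ • gsVec m k κ) (i, j)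
          = ∑ κ : GSGroup m, ⟪gsVec m k κ, x⟫ * gsVec m k κ (i, j) := by
      intro k
      rw [GS.sum_apply_pilp]
      exact Finset.sum_congr rfl fun κ _ => by rw [PiLp.smul_apply, smul_eq_mul]
    rw [GS.sum_apply_pilp, Finset.sum_congr rfl fun k _ => happ k]

    have key : ∀ k : GSGroup m,
        ∑ κ : GSGroup m, ⟪gsVec m k κ, x⟫ * gsVec m k κ (i, j)
          = ∑ i' : GSIndex m, ((∏ ℓ, m ℓ : ℕ) : ℂ)
              * (GS.phi i'.1 (j - k) * x (i', j) * GS.phi i.1 (j - k)) := by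
      intro k
      have e1 : ∀ κ : GSGroup m, ⟪gsVec m k κ, x⟫ * gsVec m k κ (i, j)
          = ∑ p' : GSIndex m × GSGroup m,
              ((starRingEnd ℂ) (gsVec m k κ p') * x p') * gsVec m k κ (i, j) := by
        intro κ
        rw [hinner, Finset.sum_mul]
      rw [Finset.sum_congr rfl fun κ _ => e1 κ, Finset.sum_comm]
      have e2 : ∀ p' : GSIndex m × GSGroup m,
          ∑ κ : GSGroup m, ((starRingEnd ℂ) (gsVec m k κ p') * x p') * gsVec m k κ (i, j)
            = (∑ κ : GSGroup m, GS.chi m κ (j - p'.2))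
                * (GS.phi p'.1.1 (p'.2 - k) * x p' * GS.phi i.1 (j - k)) := by
        intro p'
        rw [Finset.sum_mul]
        refine Finset.sum_congr rfl fun κ _ => ?_
        rw [GS.gsVec_apply, GS.gsVec_apply, map_mul, GS.conj_phi, GS.conj_chi_right,
          show GS.chi m κ (j - p'.2) = GS.chi m κ j * GS.chi m κ (-p'.2) from by
            rw [← GS.chi_add_right, ← sub_eq_add_neg]]
        ring
      rw [Finset.sum_congr rfl fun p' _ => e2 p']
      have e3 : ∀ p' : GSIndex m × GSGroup m,
          (∑ κ : GSGroup m, GS.chi m κ (j - p'.2))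
              * (GS.phi p'.1.1 (p'.2 - k) * x p' * GS.phi i.1 (j - k))
            = if p'.2 = j then ((∏ ℓ, m ℓ : ℕ) : ℂ)
                * (GS.phi p'.1.1 (p'.2 - k) * x p' * GS.phi i.1 (j - k)) else 0 := by
        intro p'
        rw [GS.sum_chi]
        by_cases hp : p'.2 = j
        · rw [if_pos (show j - p'.2 = 0 from by rw [hp, sub_self]), if_pos hp]
        · rw [if_neg (fun h0 => hp (by linear_combination -h0)), if_neg hp, zero_mul]
      rw [Finset.sum_congr rfl fun p' _ => e3 p']
      have e4 : (∑ p' : GSIndex m × GSGroup m,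
          if p'.2 = j then ((∏ ℓ, m ℓ : ℕ) : ℂ)
            * (GS.phi p'.1.1 (p'.2 - k) * x p' * GS.phi i.1 (j - k)) else 0)
          = ∑ i' : GSIndex m, ∑ j₂ : GSGroup m,
              (if j₂ = j then ((∏ ℓ, m ℓ : ℕ) : ℂ)
                * (GS.phi i'.1 (j₂ - k) * x (i', j₂) * GS.phi i.1 (j - k)) else 0) :=
        Fintype.sum_prod_type _
      rw [e4]
      refine Finset.sum_congr rfl fun i' _ => ?_
      rw [Finset.sum_ite_eq' Finset.univ j (fun j₂ => ((∏ ℓ, m ℓ : ℕ) : ℂ)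
        * (GS.phi i'.1 (j₂ - k) * x (i', j₂) * GS.phi i.1 (j - k))),
        if_pos (Finset.mem_univ _)]
    rw [Finset.sum_congr rfl fun k _ => key k, Finset.sum_comm]
    have key2 : ∀ i' : GSIndex m,
        ∑ k : GSGroup m, ((∏ ℓ, m ℓ : ℕ) : ℂ)
            * (GS.phi i'.1 (j - k) * x (i', j) * GS.phi i.1 (j - k))
          = if i' = i then 2 * ((∏ ℓ, m ℓ : ℕ) : ℂ) * x (i, j) else 0 := by
      intro i'
      have e5 : ∀ k : GSGroup m, ((∏ ℓ, m ℓ : ℕ) : ℂ)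
            * (GS.phi i'.1 (j - k) * x (i', j) * GS.phi i.1 (j - k))
          = (((∏ ℓ, m ℓ : ℕ) : ℂ) * x (i', j)) * (GS.phi i'.1 (j - k) * GS.phi i.1 (j - k)) := by
        intro k; ring
      rw [Finset.sum_congr rfl fun k _ => e5 k, ← Finset.mul_sum,
        Fintype.sum_equiv (Equiv.subLeft j) (fun k => GS.phi i'.1 (j - k) * GS.phi i.1 (j - k))
          (fun t => GS.phi i'.1 t * GS.phi i.1 t) (fun k => rfl),
        GS.sum_phi_phi m i' i]
      by_cases hii : i' = i
      · subst hii
        rw [if_pos rfl, if_pos rfl]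
        ring
      · rw [if_neg hii, if_neg hii, mul_zero]
    rw [Finset.sum_congr rfl fun i' _ => key2 i',
      Finset.sum_ite_eq' Finset.univ i (fun i' => 2 * ((∏ ℓ, m ℓ : ℕ) : ℂ) * x (i, j)),
      if_pos (Finset.mem_univ _), PiLp.smul_apply, smul_eq_mul]
    push_cast
    ring
end
end

section
/- Let Φ = (φ_1,…,φ_{d+1}) be an equiangular tight frame of d+1 vectors in ℂ^d with d ≥ 2. Then Φ is a simplex: for all pairwise distinct indices j, k, ℓ, the triple product TP(j,k,ℓ) = ⟨φ_j,φ_k⟩⟨φ_k,φ_ℓ⟩⟨φ_ℓ,φ_j⟩ is real and negative. -/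
open scoped ComplexInnerProductSpace

noncomputable section

/-- Every ETF of `d+1` vectors in `ℂ^d` (`d ≥ 2`) is a simplex: all triple products over
pairwise distinct indices are real and negative. -/
theorem etf_succ_is_simplex {d : ℕ} (hd : 2 ≤ d)
    (φ : Fin (d + 1) → EuclideanSpace ℂ (Fin d)) (hETF : IsETF d (d + 1) φ) :
    ∀ j k l : Fin (d + 1), j ≠ k → j ≠ l → k ≠ l →
      ∃ r : ℝ, r < 0 ∧ TP φ j k l = (r : ℂ) := by
  obtain ⟨hframe, hnorm, α, hα0, hα⟩ := hETF
  intro j k l hjk hjl hkl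
  have hdR : (0:ℝ) < d := by positivity
  have hdC : (d:ℂ) ≠ 0 := Nat.cast_ne_zero.mpr (by omega)
  have hGdiag : ∀ m, (⟪φ m, φ m⟫ : ℂ) = 1 := by
    intro m
    rw [inner_self_eq_norm_sq_to_K, hnorm m]
    norm_num
  have hmc : ∀ a b : Fin (d+1),
      (⟪φ a, φ b⟫ : ℂ) * ⟪φ b, φ a⟫ = ((‖(⟪φ a, φ b⟫ : ℂ)‖^2 : ℝ) : ℂ) := by
    intro a b
    rw [← inner_conj_symm (φ b) (φ a), Complex.mul_conj']
    push_cast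
    ring
  -- Gram relation
  have gram : ∀ m p : Fin (d+1),
      ∑ i, (⟪φ m, φ i⟫ : ℂ) * ⟪φ i, φ p⟫ = (((d:ℂ)+1)/d) * ⟪φ m, φ p⟫ := by
    intro m p
    have h0 := hframe (φ p)
    have h1 : (⟪φ m, φ p⟫ : ℂ)
        = ((d:ℂ)/((d+1:ℕ):ℂ)) * ∑ i, (⟪φ i, φ p⟫ : ℂ) * ⟪φ m, φ i⟫ := by
      conv_lhs => rw [h0]
      rw [inner_smul_right, inner_sum]
      simp only [inner_smul_right]
    have h2 : ∑ i, (⟪φ i, φ p⟫ : ℂ) * ⟪φ m, φ i⟫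
        = ∑ i, (⟪φ m, φ i⟫ : ℂ) * ⟪φ i, φ p⟫ :=
      Finset.sum_congr rfl fun i _ => mul_comm _ _
    rw [h2] at h1
    have hne : ((d:ℂ)+1) ≠ 0 := by
      have h : ((d+1:ℕ):ℂ) ≠ 0 := Nat.cast_ne_zero.mpr (by omega)
      push_cast at h; exact h
    push_cast at h1
    have hinv : (((d:ℂ)+1)/d) * ((d:ℂ)/((d:ℂ)+1)) = 1 := by
      field_simp
    have h3 : (((d:ℂ)+1)/d) * ⟪φ m, φ p⟫
        = ∑ i, (⟪φ m, φ i⟫ : ℂ) * ⟪φ i, φ p⟫ := by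
      rw [h1, ← mul_assoc, hinv, one_mul]
    exact h3.symm
  -- α = 1/d
  have hα_val : α = 1 / d := by
    have hg := gram j j
    rw [hGdiag j, mul_one] at hg
    rw [Finset.sum_congr rfl (fun i _ => hmc j i), ← Complex.ofReal_sum] at hg
    have hsum : ∑ i, ‖(⟪φ j, φ i⟫ : ℂ)‖^2 = 1 + d * α^2 := by
      rw [← Finset.add_sum_erase _ _ (Finset.mem_univ j), hGdiag j]
      have h3 : ∀ i ∈ Finset.univ.erase j, ‖(⟪φ j, φ i⟫ : ℂ)‖^2 = α^2 := fun i hi => by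
        rw [hα j i (Ne.symm (Finset.ne_of_mem_erase hi))]
      rw [Finset.sum_congr rfl h3, Finset.sum_const,
        Finset.card_erase_of_mem (Finset.mem_univ j)]
      simp [Finset.card_univ]
    rw [hsum] at hg
    have hreal : (1 + (d:ℝ) * α^2) = ((d:ℝ)+1)/d := by
      have h4 : ((1 + (d:ℝ) * α^2 : ℝ) : ℂ) = ((((d:ℝ)+1)/d : ℝ) : ℂ) := by
        rw [hg]; push_cast; ring
      exact_mod_cast h4
    have hsq : α^2 = (1/d)^2 := by
      field_simp at hreal ⊢
      nlinarith [hdR]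
    have h1d : (0:ℝ) < 1/d := by positivity
    have h9 : (α - 1/(d:ℝ)) * (α + 1/d) = 0 := by linear_combination hsq
    rcases mul_eq_zero.mp h9 with h | h
    · linarith
    · linarith
  -- off-diagonal sum over s = erase of j and l
  set s : Finset (Fin (d+1)) := (Finset.univ.erase j).erase l with hs
  have hls : l ∈ Finset.univ.erase j := Finset.mem_erase.mpr ⟨Ne.symm hjl, Finset.mem_univ l⟩
  have hcard : s.card = d - 1 := by
    rw [hs, Finset.card_erase_of_mem hls, Finset.card_erase_of_mem (Finset.mem_univ j)]
    simp [Finset.card_univ]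
  have hks : k ∈ s := by
    rw [hs]
    exact Finset.mem_erase.mpr ⟨hkl, Finset.mem_erase.mpr ⟨Ne.symm hjk, Finset.mem_univ k⟩⟩
  have hoff : ∑ i ∈ s, (⟪φ j, φ i⟫ : ℂ) * ⟪φ i, φ l⟫ = ((1 - (d:ℂ))/d) * ⟪φ j, φ l⟫ := by
    have hg := gram j l
    have split : ∑ i, (⟪φ j, φ i⟫ : ℂ) * ⟪φ i, φ l⟫
        = (⟪φ j, φ j⟫ : ℂ) * ⟪φ j, φ l⟫ +
          ((⟪φ j, φ l⟫ : ℂ) * ⟪φ l, φ l⟫ + ∑ i ∈ s, (⟪φ j, φ i⟫ : ℂ) * ⟪φ i, φ l⟫) := by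
      rw [← Finset.add_sum_erase _ _ (Finset.mem_univ j)]
      congr 1
      rw [hs, ← Finset.add_sum_erase _ _ hls]
    rw [split, hGdiag j, hGdiag l] at hg
    rw [div_mul_eq_mul_div, eq_div_iff hdC] at hg ⊢
    linear_combination hg
  have hGjl : (⟪φ j, φ l⟫ : ℂ) * ⟪φ l, φ j⟫ = ((1/(d:ℝ)^2 : ℝ) : ℂ) := by
    rw [hmc j l, hα j l hjl, hα_val]
    push_cast
    ring
  have hTPsum : ∑ i ∈ s, TP φ j i l = (((1 - (d:ℝ))/(d:ℝ)^3 : ℝ) : ℂ) := by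
    have h5 : ∑ i ∈ s, TP φ j i l
        = (∑ i ∈ s, (⟪φ j, φ i⟫ : ℂ) * ⟪φ i, φ l⟫) * ⟪φ l, φ j⟫ := by
      rw [Finset.sum_mul]
      exact Finset.sum_congr rfl fun i _ => by rw [TP]
    rw [h5, hoff, mul_assoc, hGjl]
    push_cast
    ring
  have hTPnorm : ∀ i ∈ s, ‖TP φ j i l‖ = 1/(d:ℝ)^3 := by
    intro i hi
    have hij : j ≠ i := Ne.symm (Finset.ne_of_mem_erase (Finset.mem_of_mem_erase hi))
    have hil : i ≠ l := Finset.ne_of_mem_erase hi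
    rw [TP, norm_mul, norm_mul, hα j i hij, hα i l hil, hα l j (Ne.symm hjl), hα_val]
    ring
  have hre_le : ∀ i ∈ s, -(1/(d:ℝ)^3) ≤ (TP φ j i l).re := by
    intro i hi
    have h6 := Complex.abs_re_le_norm (TP φ j i l)
    have h2 := hTPnorm i hi
    rw [h2] at h6
    cases abs_le.mp h6 with
    | intro h _ => linarith
  have hre_sum : ∑ i ∈ s, (TP φ j i l).re = (1 - (d:ℝ))/(d:ℝ)^3 := by
    have h7 := congrArg Complex.re hTPsum
    rw [Complex.re_sum, Complex.ofReal_re] at h7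
    exact h7
  have hconst_sum : ∑ _i ∈ s, (-(1/(d:ℝ)^3)) = (1 - (d:ℝ))/(d:ℝ)^3 := by
    rw [Finset.sum_const, hcard]
    have h8 : ((d - 1 : ℕ) : ℝ) = (d:ℝ) - 1 := by
      push_cast [Nat.cast_sub (by omega : 1 ≤ d)]; ring
    rw [nsmul_eq_mul, h8]
    ring
  have heq : ∀ i ∈ s, -(1/(d:ℝ)^3) = (TP φ j i l).re := by
    apply (Finset.sum_eq_sum_iff_of_le hre_le).mp
    rw [hre_sum, hconst_sum]
  have hpos : (0:ℝ) < 1/(d:ℝ)^3 := by positivity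
  refine ⟨-(1/(d:ℝ)^3), by linarith, ?_⟩
  have hre : (TP φ j k l).re = -(1/(d:ℝ)^3) := (heq k hks).symm
  have hnrm : ‖TP φ j k l‖ = 1/(d:ℝ)^3 := hTPnorm k hks
  have him : (TP φ j k l).im = 0 := by
    have h1 : Complex.normSq (TP φ j k l) = (TP φ j k l).re^2 + (TP φ j k l).im^2 := by
      rw [Complex.normSq_apply]; ring
    have h2 : Complex.normSq (TP φ j k l) = ‖TP φ j k l‖^2 := by
      rw [Complex.sq_norm]
    rw [h2, hnrm, hre] at h1
    nlinarith [sq_nonneg (TP φ j k l).im]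
  apply Complex.ext
  · rw [Complex.ofReal_re]; exact hre
  · rw [Complex.ofReal_im]; exact him
end
end
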